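/- arXiv:2212.06028 — 8 statements merged into one kernel-verified Lean document; each statement's English description precedes it below -/
import Mathlib

section
/- If t > 0 is such that the modified log-Sobolev inequality Ent(f) ≤ t·E(f, log f) holds for every function f : X → (0,∞), then the Poincaré inequality Var(f) ≤ 2t·E(f, f) holds for every function f : X → (0,∞). Equivalently, t_rel/2 ≤ t_MLS. -/
open Finset

noncomputable section

variable {X : Type*} [Fintype X] [DecidableEq X] [Nonempty X]

/-- Dirichlet form `E(f,g) = (1/2) ∑_{x,y} π(x) Q(x,y) (f(x)-f(y))(g(x)-g(y))`. -/
def dirichletForm (π : X → ℝ) (Q : X → X → ℝ) (f g : X → ℝ) : ℝ :=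
  (1 / 2) * ∑ x : X, ∑ y : X, π x * Q x y * (f x - f y) * (g x - g y)

/-- Mean `E[f] = ∑_x π(x) f(x)`. -/
def mean (π : X → ℝ) (f : X → ℝ) : ℝ := ∑ x : X, π x * f x

/-- Entropy `Ent(f) = E[f log f] - E[f] log E[f]`. -/
def entropy (π : X → ℝ) (f : X → ℝ) : ℝ :=
  mean π (fun x => f x * Real.log (f x)) - mean π f * Real.log (mean π f)

/-- Variance `Var(f) = E[f²] - E[f]²`. -/
def variance (π : X → ℝ) (f : X → ℝ) : ℝ :=
  mean π (fun x => f x ^ 2) - (mean π f) ^ 2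

/-- Total jump rate `Q(x) = ∑_{y ≠ x} Q(x,y)`. -/
def jumpRate (Q : X → X → ℝ) (x : X) : ℝ := ∑ y ∈ univ.erase x, Q x y

/-- Sparsity parameter `p = min_{(x,y) ∈ E} Q(x,y) / max(Q(x), Q(y,x))`. -/
def sparsity (Q : X → X → ℝ) : ℝ :=
  sInf {s : ℝ | ∃ x y : X, x ≠ y ∧ 0 < Q x y ∧
    s = Q x y / max (jumpRate Q x) (Q y x)}

/-- The transition graph `(X, E)` (symmetric since under reversibility
`Q(x,y) > 0 ↔ Q(y,x) > 0`). -/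
def chainGraph (Q : X → X → ℝ) : SimpleGraph X where
  Adj x y := x ≠ y ∧ (0 < Q x y ∨ 0 < Q y x)
  symm := by constructor; intro x y h; exact ⟨h.1.symm, h.2.symm⟩
  loopless := by constructor; intro x h; exact h.1 rfl

/-- Graph distance on `(X, E)`. -/
def graphDist (Q : X → X → ℝ) (x y : X) : ℕ := (chainGraph Q).dist x y

/-- Regularization `f⋆(x) = max_z r^{-d(x,z)} f(z)`. -/
def fStar (Q : X → X → ℝ) (r : ℝ) (f : X → ℝ) (x : X) : ℝ :=
  univ.sup' univ_nonempty (fun z => r ^ (-(graphDist Q x z : ℤ)) * f z)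

/-- `(x,y)` is an allowed transition. -/
def IsEdge (Q : X → X → ℝ) (e : X × X) : Prop := e.1 ≠ e.2 ∧ 0 < Q e.1 e.2

/-- The edge set `E = {(x,y) : x ≠ y, Q(x,y) > 0}` as a finset. -/
def edges (Q : X → X → ℝ) : Finset (X × X) :=
  univ.filter (fun e => e.1 ≠ e.2 ∧ 0 < Q e.1 e.2)

/-- Edge weight `c(x,y) = π(x) Q(x,y)`. -/
def edgeWeight (π : X → ℝ) (Q : X → X → ℝ) (e : X × X) : ℝ := π e.1 * Q e.1 e.2

/-- Distance between edges: `d(e,e') = ℓ - 1` where `ℓ` is the minimal length of a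
path `(x_0, …, x_ℓ)` with `(x_0,x_1) = e` and `(x_{ℓ-1}, x_ℓ) = e'`. -/
def edgeDist (Q : X → X → ℝ) (e e' : X × X) : ℕ :=
  sInf {n : ℕ | ∃ c : ℕ → X, c 0 = e.1 ∧ c 1 = e.2 ∧ c n = e'.1 ∧ c (n + 1) = e'.2 ∧
    ∀ i < n + 1, (chainGraph Q).Adj (c i) (c (i + 1))}

/-- `κ = max_{e' ∈ E} (1/c(e')) ∑_{e ∈ E} c(e) r^{-d(e,e')}`. -/
def kappa (π : X → ℝ) (Q : X → X → ℝ) (r : ℝ) : ℝ :=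
  sSup {k : ℝ | ∃ e' ∈ edges Q, k = (1 / edgeWeight π Q e') *
    ∑ e ∈ edges Q, edgeWeight π Q e * r ^ (-(edgeDist Q e e' : ℤ))}

/-- `H(w) = ((√w + 1)/(√w - 1)) log w` for `w ≠ 1`, and `H(1) = 4`. -/
def Hfun (w : ℝ) : ℝ :=
  if w = 1 then 4 else ((Real.sqrt w + 1) / (Real.sqrt w - 1)) * Real.log w

/-- A function is `r`-regular if `f(x) ≤ r f(y)` across every edge. -/
def IsRRegular (Q : X → X → ℝ) (r : ℝ) (f : X → ℝ) : Prop :=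
  ∀ x y : X, x ≠ y → 0 < Q x y → f x ≤ r * f y

/-- Maximum degree of the graph `(X, E)`. -/
def maxDegree (Q : X → X → ℝ) : ℕ :=
  univ.sup (fun x : X => Nat.card {y : X // (chainGraph Q).Adj x y})

/-- Irreducibility: every state can be reached from every other through allowed
transitions. -/
def MarkovIrreducible (Q : X → X → ℝ) : Prop :=
  ∀ x y : X, Relation.ReflTransGen (fun a b => a ≠ b ∧ 0 < Q a b) x y

theorem aux_log1 {u : ℝ} (h : |u| ≤ 1/2) : |Real.log (1+u) - u| ≤ 2 * u^2 := by
  have h1 : |(-u)| < 1 := by rw [abs_neg]; linarith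
  have h2 := Real.abs_log_sub_add_sum_range_le h1 1
  simp [Finset.sum_range_one] at h2
  have he : |Real.log (1+u) - u| = |-u + Real.log (1+u)| := by
    rw [show -u + Real.log (1+u) = Real.log (1+u) - u by ring]
  rw [he]
  have h3 : u^2 / (1 - |u|) ≤ 2 * u^2 := by
    rw [div_le_iff₀ (by linarith [abs_nonneg u])]
    nlinarith [sq_nonneg u, abs_nonneg u, mul_le_mul_of_nonneg_left h (sq_nonneg u)]
  linarith

theorem aux_log2 {u : ℝ} (h : |u| ≤ 1/2) :
    |(1+u) * Real.log (1+u) - u - u^2/2| ≤ 4 * |u|^3 := by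
  have h1 : |(-u)| < 1 := by rw [abs_neg]; linarith
  have h2 := Real.abs_log_sub_add_sum_range_le h1 2
  have hs : ∑ i ∈ Finset.range 2, (-u)^(i+1)/(i+1) = -u + u^2/2 := by
    simp [Finset.sum_range_succ]; ring
  rw [hs, show 1 - -u = 1 + u by ring] at h2
  have hR : |Real.log (1+u) - u + u^2/2| ≤ 2 * |u|^3 := by
    have h3 : |(-u)|^(2+1) / (1 - |(-u)|) ≤ 2 * |u|^3 := by
      rw [abs_neg, div_le_iff₀ (by linarith [abs_nonneg u])]
      norm_num
      nlinarith [pow_nonneg (abs_nonneg u) 3,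
        mul_le_mul_of_nonneg_left h (pow_nonneg (abs_nonneg u) 3)]
    calc |Real.log (1+u) - u + u^2/2| = |(-u + u^2/2) + Real.log (1+u)| := by ring_nf
      _ ≤ |(-u)|^(2+1) / (1 - |(-u)|) := h2
      _ ≤ 2 * |u|^3 := h3
  have key : (1+u) * Real.log (1+u) - u - u^2/2
      = (1+u) * (Real.log (1+u) - u + u^2/2) + (-(u^3)/2) := by ring
  rw [key]
  have habs : |(1+u) * (Real.log (1+u) - u + u^2/2) + (-(u^3)/2)|
      ≤ |1+u| * |Real.log (1+u) - u + u^2/2| + |u|^3/2 := by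
    calc _ ≤ |(1+u) * (Real.log (1+u) - u + u^2/2)| + |(-(u^3)/2)| := abs_add_le _ _
      _ = |1+u| * |Real.log (1+u) - u + u^2/2| + |u|^3/2 := by
        rw [abs_mul]; congr 1
        rw [abs_div, abs_neg, abs_pow]; norm_num
  have h1u : |1+u| ≤ 3/2 := by
    rw [abs_le] at h ⊢; constructor <;> linarith [h.1, h.2]
  have e1 : |1+u| * |Real.log (1+u) - u + u^2/2| ≤ |1+u| * (2*|u|^3) :=
    mul_le_mul_of_nonneg_left hR (abs_nonneg _)
  have e2 : |1+u| * (2*|u|^3) ≤ (3/2) * (2*|u|^3) :=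
    mul_le_mul_of_nonneg_right h1u (by positivity)
  linarith [pow_nonneg (abs_nonneg u) 3]

theorem mlsi_implies_poincare
    (π : X → ℝ) (Q : X → X → ℝ)
    (hQ : ∀ x y : X, x ≠ y → 0 ≤ Q x y)
    (hQsum : ∀ x : X, ∑ y : X, Q x y = 0)
    (hirr : MarkovIrreducible Q)
    (hπpos : ∀ x : X, 0 < π x)
    (hπsum : ∑ x : X, π x = 1)
    (hrev : ∀ x y : X, π x * Q x y = π y * Q y x)
    (t : ℝ) (ht : 0 < t)
    (hMLS : ∀ f : X → ℝ, (∀ x, 0 < f x) →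
      entropy π f ≤ t * dirichletForm π Q f (fun x => Real.log (f x))) :
     ∀ f : X → ℝ, (∀ x, 0 < f x) →
      variance π f ≤ 2 * t * dirichletForm π Q f f := by
  intro f hf
  set m : ℝ := mean π f with hm
  set g : X → ℝ := fun x => f x - m with hg
  have hmf : ∑ x : X, π x * f x = m := by rw [hm]; rfl
  have hgsum : ∑ x : X, π x * g x = 0 := by
    have e : ∑ x : X, π x * g x
        = (∑ x : X, π x * f x) - (∑ x : X, π x) * m := by
      rw [Finset.sum_mul, ← Finset.sum_sub_distrib]
      exact Finset.sum_congr rfl fun x _ => by simp only [hg]; ring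
    rw [e, hπsum, hmf]; ring
  set M : ℝ := 1 + ∑ x : X, |g x| with hMdef
  have hsum_nonneg : 0 ≤ ∑ x : X, |g x| := Finset.sum_nonneg fun x _ => abs_nonneg _
  have hM1 : 1 ≤ M := by rw [hMdef]; linarith
  have hMpos : 0 < M := by linarith
  have hMg : ∀ x : X, |g x| ≤ M := by
    intro x
    have h1 : |g x| ≤ ∑ y : X, |g y| :=
      Finset.single_le_sum (fun y _ => abs_nonneg (g y)) (Finset.mem_univ x)
    rw [hMdef]; linarith
  set V : ℝ := ∑ x : X, π x * g x ^ 2 with hVdef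
  have hVar : variance π f = V := by
    have e1 : V = (∑ x : X, π x * f x ^ 2) - 2*m*(∑ x : X, π x * f x)
        + m^2 * (∑ x : X, π x) := by
      rw [hVdef]
      calc ∑ x : X, π x * g x ^ 2
          = ∑ x : X, (π x * f x ^ 2 - 2*m*(π x * f x) + m^2 * π x) :=
            Finset.sum_congr rfl fun x _ => by simp only [hg]; ring
        _ = _ := by
            rw [Finset.sum_add_distrib, Finset.sum_sub_distrib, ← Finset.mul_sum,
              ← Finset.mul_sum]
    rw [e1, hπsum]
    simp only [variance, mean]
    rw [hmf]; ring
  set D : ℝ := dirichletForm π Q g g with hDdef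
  have hDir : dirichletForm π Q f f = D := by
    rw [hDdef]
    simp only [dirichletForm]
    congr 1
    exact Finset.sum_congr rfl fun x _ => Finset.sum_congr rfl fun y _ => by
      simp only [hg]; ring
  set SQ : ℝ := ∑ x : X, ∑ y : X, |π x * Q x y| with hSQdef
  have hSQ : 0 ≤ SQ :=
    Finset.sum_nonneg fun x _ => Finset.sum_nonneg fun y _ => abs_nonneg _
  set C2 : ℝ := 4 * M^3 * SQ with hC2def
  have hC2 : 0 ≤ C2 := by rw [hC2def]; positivity
  set K : ℝ := t * C2 + 4 * M^3 with hKdef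
  have hK : 0 ≤ K := by rw [hKdef]; positivity
  clear_value m g M V D SQ C2 K
  have main : ∀ ε : ℝ, 0 < ε → ε < 1/(2*M) → V/2 ≤ t*D + ε*K := by
    intro ε hε hεM
    have hεM2 : ε * M < 1/2 := by
      rw [lt_div_iff₀ (by positivity)] at hεM
      rw [show ε * (2*M) = 2*(ε*M) by ring] at hεM; linarith
    have hεMnn : 0 ≤ ε * M := by positivity
    have hug : ∀ x : X, |ε * g x| ≤ ε * M := fun x => by
      rw [abs_mul, abs_of_pos hε]; exact mul_le_mul_of_nonneg_left (hMg x) hε.le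
    have hug2 : ∀ x : X, |ε * g x| ≤ 1/2 := fun x => le_trans (hug x) hεM2.le
    set F : X → ℝ := fun x => 1 + ε * g x with hF
    have hFpos : ∀ x, 0 < F x := by
      intro x
      have h0 := (abs_le.mp (hug2 x)).1
      have h1 : (0:ℝ) < 1 + ε * g x := by linarith
      simpa [hF] using h1
    have hmeanF : mean π F = 1 := by
      simp only [mean, hF]
      calc ∑ x : X, π x * (1 + ε * g x)
          = ∑ x : X, (π x + ε * (π x * g x)) :=
            Finset.sum_congr rfl fun x _ => by ring
        _ = (∑ x : X, π x) + ε * ∑ x : X, π x * g x := by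
            rw [Finset.sum_add_distrib, ← Finset.mul_sum]
        _ = 1 := by rw [hπsum, hgsum]; ring
    have hEnt : entropy π F = ∑ x : X, π x * (F x * Real.log (F x)) := by
      have e0 : entropy π F
          = mean π (fun x => F x * Real.log (F x)) - mean π F * Real.log (mean π F) := rfl
      rw [e0, hmeanF]
      simp [mean]
    have hA : |entropy π F - ε^2 * V / 2| ≤ ε^3 * (4*M^3) := by
      have z1 : ∑ x : X, π x * (ε * g x) = ε * ∑ x : X, π x * g x := by
        rw [Finset.mul_sum]; exact Finset.sum_congr rfl fun x _ => by ring
      have z2 : ε^2 * V / 2 = ∑ x : X, π x * ((ε * g x)^2/2) := by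
        rw [hVdef, Finset.mul_sum, Finset.sum_div]
        exact Finset.sum_congr rfl fun x _ => by ring
      have e1 : entropy π F - ε^2 * V / 2
          = ∑ x : X, π x * (F x * Real.log (F x) - ε * g x - (ε * g x)^2/2) := by
        calc entropy π F - ε^2 * V / 2
            = (∑ x : X, π x * (F x * Real.log (F x)))
              - (∑ x : X, π x * (ε * g x)) - (∑ x : X, π x * ((ε * g x)^2/2)) := by
              rw [hEnt, z1, hgsum, z2]; ring
          _ = ∑ x : X, (π x * (F x * Real.log (F x)) - π x * (ε * g x)
                - π x * ((ε * g x)^2/2)) := by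
              rw [← Finset.sum_sub_distrib, ← Finset.sum_sub_distrib]
          _ = _ := Finset.sum_congr rfl fun x _ => by ring
      rw [e1]
      calc |∑ x : X, π x * (F x * Real.log (F x) - ε * g x - (ε * g x)^2/2)|
          ≤ ∑ x : X, |π x * (F x * Real.log (F x) - ε * g x - (ε * g x)^2/2)| :=
            Finset.abs_sum_le_sum_abs _ _
        _ ≤ ∑ x : X, π x * (4 * (ε*M)^3) := by
            refine Finset.sum_le_sum fun x _ => ?_
            rw [abs_mul, abs_of_pos (hπpos x)]
            refine mul_le_mul_of_nonneg_left ?_ (hπpos x).le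
            have h2 := aux_log2 (hug2 x)
            have h3 : |ε * g x|^3 ≤ (ε*M)^3 :=
              pow_le_pow_left₀ (abs_nonneg _) (hug x) 3
            calc |F x * Real.log (F x) - ε * g x - (ε * g x)^2/2|
                = |(1 + ε * g x) * Real.log (1 + ε * g x) - ε * g x
                    - (ε * g x)^2/2| := by simp only [hF]
              _ ≤ 4 * |ε * g x|^3 := h2
              _ ≤ 4 * (ε*M)^3 := by linarith
        _ = ε^3 * (4*M^3) := by rw [← Finset.sum_mul, hπsum]; ring
    set r : X → ℝ := fun x => Real.log (F x) - ε * g x with hr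
    clear_value F r
    have hrb : ∀ x : X, |r x| ≤ 2 * (ε*M)^2 := by
      intro x
      have h1 := aux_log1 (hug2 x)
      have h4 : (ε * g x)^2 ≤ (ε*M)^2 := by
        have h5 : |ε * g x|^2 ≤ (ε*M)^2 := pow_le_pow_left₀ (abs_nonneg _) (hug x) 2
        rwa [sq_abs] at h5
      simp only [hr, hF]
      calc |Real.log (1 + ε * g x) - ε * g x| ≤ 2 * (ε * g x)^2 := h1
        _ ≤ 2 * (ε*M)^2 := by linarith
    have hBform : dirichletForm π Q F (fun x => Real.log (F x)) - ε^2 * D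
        = (1/2) * ∑ x : X, ∑ y : X,
            π x * Q x y * (ε * (g x - g y)) * (r x - r y) := by
      have expand : ∀ x y : X,
          π x * Q x y * (F x - F y) * (Real.log (F x) - Real.log (F y))
            - ε^2 * (π x * Q x y * (g x - g y) * (g x - g y))
          = π x * Q x y * (ε * (g x - g y)) * (r x - r y) := by
        intro x y; simp only [hF, hr]; ring
      simp only [dirichletForm, hDdef]
      calc (1/2) * (∑ x : X, ∑ y : X,
              π x * Q x y * (F x - F y) * (Real.log (F x) - Real.log (F y)))
            - ε^2 * ((1/2) * ∑ x : X, ∑ y : X,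
              π x * Q x y * (g x - g y) * (g x - g y))
          = (1/2) * ((∑ x : X, ∑ y : X,
              π x * Q x y * (F x - F y) * (Real.log (F x) - Real.log (F y)))
            - ∑ x : X, ∑ y : X,
              ε^2 * (π x * Q x y * (g x - g y) * (g x - g y))) := by
            have pull : ∑ x : X, ∑ y : X,
                ε^2 * (π x * Q x y * (g x - g y) * (g x - g y))
                = ε^2 * ∑ x : X, ∑ y : X,
                    π x * Q x y * (g x - g y) * (g x - g y) := by
              rw [Finset.mul_sum]
              exact Finset.sum_congr rfl fun x _ => by rw [Finset.mul_sum]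
            rw [pull]; ring
        _ = (1/2) * ∑ x : X, ∑ y : X,
              π x * Q x y * (ε * (g x - g y)) * (r x - r y) := by
            congr 1
            rw [← Finset.sum_sub_distrib]
            refine Finset.sum_congr rfl fun x _ => ?_
            rw [← Finset.sum_sub_distrib]
            exact Finset.sum_congr rfl fun y _ => expand x y
    have hBbound : |dirichletForm π Q F (fun x => Real.log (F x)) - ε^2 * D|
        ≤ ε^3 * C2 := by
      rw [hBform, abs_mul, abs_of_pos (by norm_num : (0:ℝ) < 1/2)]
      have step : |∑ x : X, ∑ y : X,
          π x * Q x y * (ε * (g x - g y)) * (r x - r y)|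
          ≤ SQ * (8 * ε^3 * M^3) := by
        calc |∑ x : X, ∑ y : X, π x * Q x y * (ε * (g x - g y)) * (r x - r y)|
            ≤ ∑ x : X, |∑ y : X, π x * Q x y * (ε * (g x - g y)) * (r x - r y)| :=
              Finset.abs_sum_le_sum_abs _ _
          _ ≤ ∑ x : X, ∑ y : X,
              |π x * Q x y * (ε * (g x - g y)) * (r x - r y)| :=
              Finset.sum_le_sum fun x _ => Finset.abs_sum_le_sum_abs _ _
          _ ≤ ∑ x : X, ∑ y : X, |π x * Q x y| * (8 * ε^3 * M^3) := by
              refine Finset.sum_le_sum fun x _ => Finset.sum_le_sum fun y _ => ?_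
              rw [abs_mul, abs_mul]
              have b1 : |ε * (g x - g y)| ≤ ε * (2*M) := by
                rw [abs_mul, abs_of_pos hε]
                refine mul_le_mul_of_nonneg_left ?_ hε.le
                calc |g x - g y| ≤ |g x| + |g y| := abs_sub _ _
                  _ ≤ 2*M := by linarith [hMg x, hMg y]
              have b2 : |r x - r y| ≤ 4 * (ε*M)^2 := by
                calc |r x - r y| ≤ |r x| + |r y| := abs_sub _ _
                  _ ≤ 4 * (ε*M)^2 := by linarith [hrb x, hrb y]
              calc |π x * Q x y| * |ε * (g x - g y)| * |r x - r y|
                  ≤ |π x * Q x y| * (ε * (2*M)) * |r x - r y| := by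
                    refine mul_le_mul_of_nonneg_right
                      (mul_le_mul_of_nonneg_left b1 (abs_nonneg _)) (abs_nonneg _)
                _ ≤ |π x * Q x y| * (ε * (2*M)) * (4 * (ε*M)^2) := by
                    refine mul_le_mul_of_nonneg_left b2 (by positivity)
                _ = |π x * Q x y| * (8 * ε^3 * M^3) := by ring
          _ = SQ * (8 * ε^3 * M^3) := by
              rw [hSQdef, Finset.sum_mul]
              exact Finset.sum_congr rfl fun x _ => by rw [Finset.sum_mul]
      calc (1/2) * |∑ x : X, ∑ y : X,
            π x * Q x y * (ε * (g x - g y)) * (r x - r y)|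
          ≤ (1/2) * (SQ * (8 * ε^3 * M^3)) :=
            mul_le_mul_of_nonneg_left step (by norm_num)
        _ = ε^3 * C2 := by rw [hC2def]; ring
    have h1 := (abs_le.mp hA).1
    have h2 := (abs_le.mp hBbound).2
    have h3 := hMLS F hFpos
    have h5 : entropy π F ≤ t * (ε^2*D + ε^3*C2) := by
      refine le_trans h3 (mul_le_mul_of_nonneg_left (by linarith) ht.le)
    have h4 : ε^2 * (V/2) ≤ ε^2 * (t*D + ε*K) := by
      rw [hKdef]; nlinarith [h1, h5]
    exact le_of_mul_le_mul_left h4 (by positivity)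
  have hhalf : V/2 ≤ t*D := by
    refine le_of_forall_pos_le_add fun η hη => ?_
    have hK1 : (0:ℝ) < K + 1 := by linarith
    set ε : ℝ := min (1/(4*M)) (η/(K+1)) with hε
    have hεpos : 0 < ε := lt_min (by positivity) (by positivity)
    have hεlt : ε < 1/(2*M) := by
      refine lt_of_le_of_lt (min_le_left _ _) ?_
      refine one_div_lt_one_div_of_lt (by positivity) (by linarith)
    have hεK : ε * K ≤ η := by
      have h6 : ε ≤ η/(K+1) := min_le_right _ _
      have h7 : ε * K ≤ (η/(K+1)) * K := mul_le_mul_of_nonneg_right h6 hK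
      have h8 : (η/(K+1)) * K ≤ η := by
        rw [div_mul_eq_mul_div, div_le_iff₀ hK1]; nlinarith
      linarith
    linarith [main ε hεpos hεlt]
  rw [hVar, hDir]
  linarith


end
end

section
/- If t > 0 is such that the log-Sobolev inequality Ent(f) ≤ t·E(√f, √f) holds for every function f : X → (0,∞), then the modified log-Sobolev inequality Ent(f) ≤ (t/4)·E(f, log f) holds for every function f : X → (0,∞). Equivalently, t_MLS ≤ t_LS/4. -/
open Finset

noncomputable section

variable {X : Type*} [Fintype X] [DecidableEq X] [Nonempty X]

lemma aux_log_ineq : ∀ x : ℝ, 1 ≤ x → 2 * (x - 1) ≤ (x + 1) * Real.log x := by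
  intro x hx
  set F : ℝ → ℝ := fun y => (y + 1) * Real.log y - 2 * (y - 1) with hF
  have key : MonotoneOn F (Set.Ici 1) := by
    apply monotoneOn_of_deriv_nonneg (convex_Ici 1)
    · apply ContinuousOn.sub
      · exact (continuousOn_id.add continuousOn_const).mul
          (Real.continuousOn_log.mono (by intro y hy; simp at hy ⊢; linarith))
      · exact continuousOn_const.mul (continuousOn_id.sub continuousOn_const)
    · intro y hy
      rw [interior_Ici] at hy
      have hy1 : (1:ℝ) < y := hy
      have hy0 : (0:ℝ) < y := by linarith
      exact (((hasDerivAt_id y).add_const 1).mul (Real.hasDerivAt_log hy0.ne')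
        |>.sub (((hasDerivAt_id y).sub_const 1).const_mul 2)).differentiableAt.differentiableWithinAt
    · intro y hy
      rw [interior_Ici] at hy
      have hy1 : (1:ℝ) < y := hy
      have hy0 : (0:ℝ) < y := by linarith
      have hD : HasDerivAt F (1 * Real.log y + (y + 1) * y⁻¹ - 2 * 1) y := by
        have h := (((hasDerivAt_id y).add_const 1).mul (Real.hasDerivAt_log hy0.ne')
          |>.sub (((hasDerivAt_id y).sub_const 1).const_mul 2))
        exact h
      rw [hD.deriv]
      have hlog : Real.log y ≥ 1 - 1/y := by
        have := Real.log_le_sub_one_of_pos (show (0:ℝ) < 1/y by positivity)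
        rw [Real.log_div one_ne_zero hy0.ne', Real.log_one] at this
        linarith
      have heq : (y + 1) * y⁻¹ = 1 + 1/y := by field_simp
      rw [heq]
      have h1y : 1/y ≤ 1 := by rw [div_le_one hy0]; linarith
      linarith
  have hF1 : F 1 = 0 := by simp [hF]
  have := key (Set.mem_Ici.mpr le_rfl) (Set.mem_Ici.mpr hx) hx
  rw [hF1] at this
  simp only [hF] at this
  linarith

lemma aux_key_ineq : ∀ a b : ℝ, 0 < a → 0 < b →
    4 * (Real.sqrt a - Real.sqrt b) ^ 2 ≤ (a - b) * (Real.log a - Real.log b) := by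
  have main : ∀ a b : ℝ, 0 < a → 0 < b → b ≤ a →
      4 * (Real.sqrt a - Real.sqrt b) ^ 2 ≤ (a - b) * (Real.log a - Real.log b) := by
    intro a b ha hb hba
    set u := Real.sqrt a with hu
    set v := Real.sqrt b with hv
    have hu0 : 0 < u := Real.sqrt_pos.mpr ha
    have hv0 : 0 < v := Real.sqrt_pos.mpr hb
    have huv : v ≤ u := Real.sqrt_le_sqrt hba
    have ha' : a = u ^ 2 := (Real.sq_sqrt ha.le).symm
    have hb' : b = v ^ 2 := (Real.sq_sqrt hb.le).symm
    have hx : (1:ℝ) ≤ u / v := (one_le_div hv0).mpr huv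
    have h1 : 2 * (u / v - 1) ≤ (u / v + 1) * Real.log (u / v) := aux_log_ineq _ hx
    have hlog : Real.log (u / v) = Real.log u - Real.log v := Real.log_div hu0.ne' hv0.ne'
    rw [hlog] at h1
    have h2 : 2 * (u - v) ≤ (u + v) * (Real.log u - Real.log v) := by
      have := mul_le_mul_of_nonneg_left h1 hv0.le
      calc 2 * (u - v) = v * (2 * (u / v - 1)) := by field_simp
        _ ≤ v * ((u / v + 1) * (Real.log u - Real.log v)) := this
        _ = (u + v) * (Real.log u - Real.log v) := by field_simp
    have hla : Real.log a = 2 * Real.log u := by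
      rw [ha', Real.log_pow]; push_cast; ring
    have hlb : Real.log b = 2 * Real.log v := by
      rw [hb', Real.log_pow]; push_cast; ring
    rw [hla, hlb, ha', hb']
    nlinarith [sub_nonneg.mpr huv, mul_le_mul_of_nonneg_left h2 (sub_nonneg.mpr huv)]
  intro a b ha hb
  rcases le_total b a with h | h
  · exact main a b ha hb h
  · have := main b a hb ha h
    nlinarith [this]

theorem lsi_implies_mlsi
    (π : X → ℝ) (Q : X → X → ℝ)
    (hQ : ∀ x y : X, x ≠ y → 0 ≤ Q x y)
    (hQsum : ∀ x : X, ∑ y : X, Q x y = 0)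
    (hirr : MarkovIrreducible Q)
    (hπpos : ∀ x : X, 0 < π x)
    (hπsum : ∑ x : X, π x = 1)
    (hrev : ∀ x y : X, π x * Q x y = π y * Q y x)
    (t : ℝ) (ht : 0 < t)
    (hLS : ∀ f : X → ℝ, (∀ x, 0 < f x) →
      entropy π f ≤ t * dirichletForm π Q (fun x => Real.sqrt (f x)) (fun x => Real.sqrt (f x))) :
     ∀ f : X → ℝ, (∀ x, 0 < f x) →
      entropy π f ≤ (t / 4) * dirichletForm π Q f (fun x => Real.log (f x)) := by
  intro f hf
  have hstep : dirichletForm π Q (fun x => Real.sqrt (f x)) (fun x => Real.sqrt (f x))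
      ≤ (1 / 4) * dirichletForm π Q f (fun x => Real.log (f x)) := by
    unfold dirichletForm
    rw [← mul_assoc]
    have : (1:ℝ)/4 * (1/2) = (1/2) * (1/4) := by ring
    rw [this, mul_assoc]
    apply mul_le_mul_of_nonneg_left _ (by norm_num : (0:ℝ) ≤ 1/2)
    rw [Finset.mul_sum]
    apply Finset.sum_le_sum
    intro x _
    rw [Finset.mul_sum]
    apply Finset.sum_le_sum
    intro y _
    rcases eq_or_ne x y with rfl | hxy
    · simp
    · have hπQ : 0 ≤ π x * Q x y := mul_nonneg (hπpos x).le (hQ x y hxy)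
      have hkey := aux_key_ineq (f x) (f y) (hf x) (hf y)
      calc π x * Q x y * (Real.sqrt (f x) - Real.sqrt (f y)) *
            (Real.sqrt (f x) - Real.sqrt (f y))
          = (π x * Q x y) * ((Real.sqrt (f x) - Real.sqrt (f y)) ^ 2) := by ring
        _ ≤ (π x * Q x y) * ((1/4) * ((f x - f y) * (Real.log (f x) - Real.log (f y)))) := by
            apply mul_le_mul_of_nonneg_left _ hπQ
            linarith
        _ = 1 / 4 * (π x * Q x y * (f x - f y) * (Real.log (f x) - Real.log (f y))) := by ring
  calc entropy π f
      ≤ t * dirichletForm π Q (fun x => Real.sqrt (f x)) (fun x => Real.sqrt (f x)) :=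
        hLS f hf
    _ ≤ t * ((1/4) * dirichletForm π Q f (fun x => Real.log (f x))) :=
        mul_le_mul_of_nonneg_left hstep ht.le
    _ = (t / 4) * dirichletForm π Q f (fun x => Real.log (f x)) := by ring

end
end

section
/- For all real numbers u, v > 0, one has 4(√u − √v)² ≤ (u − v)·log(u/v). -/
open Finset

noncomputable section

variable {X : Type*} [Fintype X] [DecidableEq X] [Nonempty X]

private lemma log_ge_one_sub_inv {x : ℝ} (hx : 0 < x) : 1 - 1/x ≤ Real.log x := by
  have h := Real.log_le_sub_one_of_pos (x := 1/x) (by positivity)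
  rw [Real.log_div one_ne_zero (ne_of_gt hx), Real.log_one] at h
  linarith

private lemma key_log_ineq {s : ℝ} (hs : 1 ≤ s) : 2 * (s - 1) ≤ (s + 1) * Real.log s := by
  set f : ℝ → ℝ := fun x => (x + 1) * Real.log x - 2 * (x - 1) with hf
  have hderiv : ∀ x : ℝ, 0 < x → HasDerivAt f (Real.log x + (x + 1) * x⁻¹ - 2) x := by
    intro x hx0
    have h1 : HasDerivAt (fun x : ℝ => (x + 1) * Real.log x)
        (1 * Real.log x + (x + 1) * x⁻¹) x :=
      (((hasDerivAt_id x).add_const 1).mul (Real.hasDerivAt_log (ne_of_gt hx0)))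
    have h2 : HasDerivAt (fun x : ℝ => 2 * (x - 1)) 2 x := by
      simpa using ((hasDerivAt_id x).sub_const 1).const_mul 2
    have := h1.sub h2
    rw [show Real.log x + (x + 1) * x⁻¹ - 2 = 1 * Real.log x + (x + 1) * x⁻¹ - 2 by ring]
    exact this
  have hmono : MonotoneOn f (Set.Ici 1) := by
    apply monotoneOn_of_deriv_nonneg (convex_Ici 1)
    · apply ContinuousOn.sub
      · exact (continuousOn_id.add continuousOn_const).mul
          (Real.continuousOn_log.mono (by intro x hx; simp at hx ⊢; linarith))
      · exact (continuousOn_const.mul (continuousOn_id.sub continuousOn_const))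
    · intro x hx
      rw [interior_Ici] at hx
      have hx0 : (0:ℝ) < x := lt_trans one_pos hx
      exact (hderiv x hx0).differentiableAt.differentiableWithinAt
    · intro x hx
      rw [interior_Ici] at hx
      have hx1 : (1:ℝ) < x := hx
      have hx0 : (0:ℝ) < x := by linarith
      rw [(hderiv x hx0).deriv]
      have hlog := log_ge_one_sub_inv hx0
      have hxx : (x+1) * x⁻¹ = 1 + 1/x := by field_simp
      rw [hxx]
      nlinarith [log_ge_one_sub_inv hx0]
  have h := hmono (Set.self_mem_Ici) (by exact hs) hs
  simp only [hf, Real.log_one] at h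
  linarith [h]

private lemma half_case {u v : ℝ} (hu : 0 < u) (hv : 0 < v) (huv : v ≤ u) :
    4 * (Real.sqrt u - Real.sqrt v) ^ 2 ≤ (u - v) * Real.log (u / v) := by
  set a := Real.sqrt u with ha
  set b := Real.sqrt v with hb
  have ha0 : 0 < a := Real.sqrt_pos.mpr hu
  have hb0 : 0 < b := Real.sqrt_pos.mpr hv
  have hab : b ≤ a := Real.sqrt_le_sqrt huv
  have hua : u = a ^ 2 := (Real.sq_sqrt hu.le).symm
  have hvb : v = b ^ 2 := (Real.sq_sqrt hv.le).symm
  have hs : 1 ≤ a / b := (one_le_div hb0).mpr hab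
  have hkey := key_log_ineq hs
  have hlog : Real.log (a / b) = Real.log (u / v) / 2 := by
    rw [hua, hvb, ← div_pow, Real.log_pow]
    push_cast
    ring
  rw [hlog] at hkey
  have h2 : 2 * (a - b) ≤ (a + b) * (Real.log (u / v) / 2) := by
    have := mul_le_mul_of_nonneg_left hkey hb0.le
    calc 2 * (a - b) = b * (2 * (a/b - 1)) := by field_simp
      _ ≤ b * ((a/b + 1) * (Real.log (u/v) / 2)) := this
      _ = (a + b) * (Real.log (u / v) / 2) := by field_simp
  have hlognn : 0 ≤ Real.log (u / v) := Real.log_nonneg ((one_le_div hv).mpr huv)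
  nlinarith [sq_nonneg (a - b), mul_le_mul_of_nonneg_left h2 (by linarith : (0:ℝ) ≤ 2 * (a - b))]

theorem four_sq_sqrt_le (u v : ℝ) (hu : 0 < u) (hv : 0 < v) :
    4 * (Real.sqrt u - Real.sqrt v) ^ 2 ≤ (u - v) * Real.log (u / v) := by
  rcases le_total v u with h | h
  · exact half_case hu hv h
  · have := half_case hv hu h
    have hlog : Real.log (u / v) = - Real.log (v / u) := by
      rw [← Real.log_inv]; congr 1; field_simp
    rw [hlog]
    nlinarith [this]

end
end

section
/- For any function f : X → (0,∞), one has 4·E(√f, √f) ≤ E(f, log f). -/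
open Finset

noncomputable section

variable {X : Type*} [Fintype X] [DecidableEq X] [Nonempty X]

private lemma aux_mono (t : ℝ) (ht : 1 ≤ t) : 2*(t-1) ≤ (t+1)*Real.log t := by
  have hmono : MonotoneOn (fun t : ℝ => (t+1)*Real.log t - 2*(t-1)) (Set.Ici 1) := by
    apply monotoneOn_of_deriv_nonneg (convex_Ici 1)
    · apply ContinuousOn.sub
      · exact ((continuousOn_id.add continuousOn_const).mul
          (Real.continuousOn_log.mono (by intro x hx; simp at hx ⊢; linarith [hx])))
      · fun_prop
    · intro t ht
      rw [interior_Ici] at ht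
      have ht0 : (0:ℝ) < t := lt_trans one_pos ht
      have h1 : HasDerivAt (fun t : ℝ => (t+1)*Real.log t - 2*(t-1))
          ((1) * Real.log t + (t+1) * t⁻¹ - 2 * 1) t := by
        exact (((hasDerivAt_id t).add_const 1).mul (Real.hasDerivAt_log ht0.ne')).sub
          (((hasDerivAt_id t).sub_const 1).const_mul 2)
      exact h1.differentiableAt.differentiableWithinAt
    · intro t ht
      rw [interior_Ici] at ht
      have ht0 : (0:ℝ) < t := lt_trans one_pos ht
      have h1 : HasDerivAt (fun t : ℝ => (t+1)*Real.log t - 2*(t-1))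
          ((1) * Real.log t + (t+1) * t⁻¹ - 2 * 1) t :=
        (((hasDerivAt_id t).add_const 1).mul (Real.hasDerivAt_log ht0.ne')).sub
          (((hasDerivAt_id t).sub_const 1).const_mul 2)
      rw [h1.deriv]
      have hlog : 1 - t⁻¹ ≤ Real.log t := by
        have := Real.log_le_sub_one_of_pos (x := t⁻¹) (by positivity)
        rw [Real.log_inv] at this
        linarith
      have : (t+1) * t⁻¹ = 1 + t⁻¹ := by field_simp
      rw [this]
      linarith
  have := hmono (Set.self_mem_Ici) (Set.mem_Ici.mpr ht) ht
  simp at this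
  linarith

private lemma aux_key (a b : ℝ) (ha : 0 < a) (hb : 0 < b) :
    4 * (Real.sqrt a - Real.sqrt b) ^ 2 ≤ (a - b) * (Real.log a - Real.log b) := by
  -- wlog b ≤ a
  wlog hab : b ≤ a with H
  · have := H b a hb ha (le_of_not_ge hab)
    nlinarith [this]
  have hsb : 0 < Real.sqrt b := Real.sqrt_pos.mpr hb
  have hsa : 0 < Real.sqrt a := Real.sqrt_pos.mpr ha
  have hs : Real.sqrt b ≤ Real.sqrt a := Real.sqrt_le_sqrt hab
  set s := Real.sqrt a
  set u := Real.sqrt b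
  have ht : 1 ≤ s / u := (one_le_div hsb).mpr hs
  have h2 := aux_mono (s/u) ht
  have hlog : Real.log (s/u) = Real.log s - Real.log u := Real.log_div hsa.ne' hsb.ne'
  rw [hlog] at h2
  -- multiply by u
  have h3 : 2 * (s - u) ≤ (s + u) * (Real.log s - Real.log u) := by
    have := mul_le_mul_of_nonneg_right h2 hsb.le
    have e1 : 2*(s/u-1) * u = 2*(s-u) := by field_simp
    have e2 : (s/u+1) * (Real.log s - Real.log u) * u = (s+u)*(Real.log s - Real.log u) := by
      field_simp
    nlinarith [this]
  have ea : a = s^2 := (Real.sq_sqrt ha.le).symm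
  have eb : b = u^2 := (Real.sq_sqrt hb.le).symm
  have ela : Real.log a = 2 * Real.log s := by
    rw [ea, Real.log_pow]; push_cast; ring
  have elb : Real.log b = 2 * Real.log u := by
    rw [eb, Real.log_pow]; push_cast; ring
  rw [ela, elb, ea, eb]
  nlinarith [h3, sub_nonneg.mpr hs]

theorem lsi_form_le_mlsi_form
    (π : X → ℝ) (Q : X → X → ℝ)
    (hQ : ∀ x y : X, x ≠ y → 0 ≤ Q x y)
    (hQsum : ∀ x : X, ∑ y : X, Q x y = 0)
    (hirr : MarkovIrreducible Q)
    (hπpos : ∀ x : X, 0 < π x)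
    (hπsum : ∑ x : X, π x = 1)
    (hrev : ∀ x y : X, π x * Q x y = π y * Q y x)
    (f : X → ℝ) (hf : ∀ x, 0 < f x) :
     4 * dirichletForm π Q (fun x => Real.sqrt (f x)) (fun x => Real.sqrt (f x)) ≤
      dirichletForm π Q f (fun x => Real.log (f x)) := by
  have key : ∀ x y : X, 4 * (π x * Q x y * (Real.sqrt (f x) - Real.sqrt (f y)) *
      (Real.sqrt (f x) - Real.sqrt (f y)))
      ≤ π x * Q x y * (f x - f y) * (Real.log (f x) - Real.log (f y)) := by
    intro x y
    rcases eq_or_ne x y with rfl | h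
    · simp
    · have hpq : 0 ≤ π x * Q x y := mul_nonneg (hπpos x).le (hQ x y h)
      have hk := aux_key (f x) (f y) (hf x) (hf y)
      nlinarith [mul_le_mul_of_nonneg_left hk hpq]
  have hsum : ∑ x : X, ∑ y : X, 4 * (π x * Q x y * (Real.sqrt (f x) - Real.sqrt (f y)) *
      (Real.sqrt (f x) - Real.sqrt (f y)))
      ≤ ∑ x : X, ∑ y : X, π x * Q x y * (f x - f y) * (Real.log (f x) - Real.log (f y)) :=
    Finset.sum_le_sum (fun x _ => Finset.sum_le_sum (fun y _ => key x y))
  have e : ∑ x : X, ∑ y : X, 4 * (π x * Q x y * (Real.sqrt (f x) - Real.sqrt (f y)) *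
      (Real.sqrt (f x) - Real.sqrt (f y)))
      = 4 * ∑ x : X, ∑ y : X, π x * Q x y * (Real.sqrt (f x) - Real.sqrt (f y)) *
      (Real.sqrt (f x) - Real.sqrt (f y)) := by
    simp [Finset.mul_sum]
  unfold dirichletForm
  rw [e] at hsum
  linarith


end
end

section
/- (Exploiting regularity) Let r ≥ 1. If f : X → (0,∞) is r-regular, i.e. f(x) ≤ r·f(y) for all (x,y) ∈ E, then E(f, log f) ≤ H(r)·E(√f, √f), where H(r) := ((√r + 1)/(√r − 1))·log r for r > 1 and H(1) := 4. -/
open Finset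

noncomputable section

variable {X : Type*} [Fintype X] [DecidableEq X] [Nonempty X]

section Aux

lemma two_log_le {w : ℝ} (hw : 1 ≤ w) : 2 * Real.log w ≤ w - 1/w := by
  have hw0 : 0 < w := lt_of_lt_of_le one_pos hw
  have h2 : Real.log w ≤ Real.sinh (Real.log w) :=
    Real.self_le_sinh_iff.mpr (Real.log_nonneg hw)
  rw [Real.sinh_log hw0] at h2
  rw [one_div]; linarith

lemma g_mono : MonotoneOn (fun w => (w + 1) * Real.log w / (w - 1)) (Set.Ioi (1:ℝ)) := by
  have hderiv : ∀ w ∈ Set.Ioi (1:ℝ), HasDerivAt (fun w => (w + 1) * Real.log w / (w - 1))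
      (((Real.log w + (w + 1) / w) * (w - 1) - (w + 1) * Real.log w * 1) / (w - 1) ^ 2) w := by
    intro w hw
    have hw1 : (1:ℝ) < w := hw
    have hw0 : 0 < w := lt_trans one_pos hw1
    have hN : HasDerivAt (fun w : ℝ => (w + 1) * Real.log w) (Real.log w + (w + 1) / w) w := by
      have := ((hasDerivAt_id w).add_const 1).mul (Real.hasDerivAt_log (ne_of_gt hw0))
      refine this.congr_deriv ?_
      simp [div_eq_mul_inv]
    have hD : HasDerivAt (fun w : ℝ => w - 1) 1 w := (hasDerivAt_id w).sub_const 1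
    exact hN.div hD (sub_ne_zero.mpr hw1.ne')
  apply monotoneOn_of_deriv_nonneg (convex_Ioi 1)
  · exact fun w hw => ((hderiv w hw).continuousAt).continuousWithinAt
  · rw [interior_Ioi]
    exact fun w hw => ((hderiv w hw).differentiableAt).differentiableWithinAt
  · rw [interior_Ioi]
    intro w hw
    rw [(hderiv w hw).deriv]
    have hw1 : (1:ℝ) < w := hw
    have hw0 : 0 < w := lt_trans one_pos hw1
    apply div_nonneg _ (sq_nonneg _)
    have h := two_log_le hw1.le
    have : (Real.log w + (w + 1) / w) * (w - 1) - (w + 1) * Real.log w * 1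
        = (w - 1/w) - 2 * Real.log w := by field_simp; ring
    rw [this]; linarith

lemma key {r u : ℝ} (hr : 1 ≤ r) (hu1 : 1 ≤ u) (huv : u ≤ Real.sqrt r) :
    2 * (u + 1) * Real.log u ≤ Hfun r * (u - 1) := by
  rcases eq_or_lt_of_le hu1 with h1 | h1
  · rw [← h1]; simp
  · -- 1 < u ≤ √r, so r > 1
    have hv1 : (1:ℝ) < Real.sqrt r := lt_of_lt_of_le h1 huv
    have hr1 : (1:ℝ) < r := by
      by_contra h
      push_neg at h
      have : Real.sqrt r ≤ 1 := by
        calc Real.sqrt r ≤ Real.sqrt 1 := Real.sqrt_le_sqrt h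
        _ = 1 := Real.sqrt_one
      linarith
    have hH : Hfun r = (Real.sqrt r + 1) / (Real.sqrt r - 1) * Real.log r := by
      rw [Hfun, if_neg (ne_of_gt hr1)]
    have hlogr : Real.log r = 2 * Real.log (Real.sqrt r) := by
      rw [Real.log_sqrt (le_of_lt (lt_trans one_pos hr1))]; ring
    set v := Real.sqrt r with hv
    have hg := g_mono (Set.mem_Ioi.mpr h1) (Set.mem_Ioi.mpr hv1) huv
    simp only at hg
    -- hg : (u+1) log u / (u-1) ≤ (v+1) log v / (v-1)
    have hu0 : (0:ℝ) < u - 1 := by linarith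
    have hv0 : (0:ℝ) < v - 1 := by linarith
    rw [div_le_div_iff₀ hu0 hv0] at hg
    rw [hH, hlogr]
    have h2 : 2 * ((u + 1) * Real.log u * (v - 1)) ≤ 2 * ((v + 1) * Real.log v * (u - 1)) := by
      linarith
    calc 2 * (u + 1) * Real.log u
        = 2 * ((u + 1) * Real.log u * (v - 1)) / (v - 1) := by field_simp
      _ ≤ 2 * ((v + 1) * Real.log v * (u - 1)) / (v - 1) := by
          exact div_le_div_of_nonneg_right h2 hv0.le
      _ = (v + 1) / (v - 1) * (2 * Real.log v) * (u - 1) := by field_simp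

lemma pointwise_aux {r a b : ℝ} (hr : 1 ≤ r) (ha : 0 < a) (hb : 0 < b)
    (hba : b ≤ a) (hab : a ≤ r * b) :
    (a - b) * (Real.log a - Real.log b) ≤
      Hfun r * ((Real.sqrt a - Real.sqrt b) * (Real.sqrt a - Real.sqrt b)) := by
  set s := Real.sqrt a with hs
  set t := Real.sqrt b with ht
  have ht0 : 0 < t := Real.sqrt_pos.mpr hb
  have hs0 : 0 < s := Real.sqrt_pos.mpr ha
  have hts : t ≤ s := Real.sqrt_le_sqrt hba
  have hu1 : 1 ≤ s / t := (one_le_div ht0).mpr hts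
  have huv : s / t ≤ Real.sqrt r := by
    rw [div_le_iff₀ ht0]
    calc s ≤ Real.sqrt (r * b) := Real.sqrt_le_sqrt hab
      _ = Real.sqrt r * t := Real.sqrt_mul (le_trans zero_le_one hr) b
  have hk := key hr hu1 huv
  have hst : 0 ≤ s - t := by linarith
  have hmul := mul_le_mul_of_nonneg_right hk (mul_nonneg ht0.le hst)
  have ha' : a = s ^ 2 := (Real.sq_sqrt ha.le).symm
  have hb' : b = t ^ 2 := (Real.sq_sqrt hb.le).symm
  have hlog : Real.log a - Real.log b = 2 * Real.log (s / t) := by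
    rw [ha', hb', Real.log_pow, Real.log_pow, Real.log_div hs0.ne' ht0.ne']
    push_cast; ring
  rw [hlog, ha', hb']
  have e1 : 2 * (s / t + 1) * Real.log (s / t) * (t * (s - t))
      = (s ^ 2 - t ^ 2) * (2 * Real.log (s / t)) := by
    field_simp; ring
  have e2 : Hfun r * (s / t - 1) * (t * (s - t)) = Hfun r * ((s - t) * (s - t)) := by
    field_simp
  rw [e1, e2] at hmul
  exact hmul

lemma pointwise {r a b : ℝ} (hr : 1 ≤ r) (ha : 0 < a) (hb : 0 < b)
    (hab : a ≤ r * b) (hba : b ≤ r * a) :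
    (a - b) * (Real.log a - Real.log b) ≤
      Hfun r * ((Real.sqrt a - Real.sqrt b) * (Real.sqrt a - Real.sqrt b)) := by
  rcases le_total b a with h | h
  · exact pointwise_aux hr ha hb h hab
  · have := pointwise_aux hr hb ha h hba
    calc (a - b) * (Real.log a - Real.log b)
        = (b - a) * (Real.log b - Real.log a) := by ring
      _ ≤ Hfun r * ((Real.sqrt b - Real.sqrt a) * (Real.sqrt b - Real.sqrt a)) := this
      _ = Hfun r * ((Real.sqrt a - Real.sqrt b) * (Real.sqrt a - Real.sqrt b)) := by ring

end Aux

theorem exploiting_regularity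
    (π : X → ℝ) (Q : X → X → ℝ)
    (hQ : ∀ x y : X, x ≠ y → 0 ≤ Q x y)
    (hQsum : ∀ x : X, ∑ y : X, Q x y = 0)
    (hirr : MarkovIrreducible Q)
    (hπpos : ∀ x : X, 0 < π x)
    (hπsum : ∑ x : X, π x = 1)
    (hrev : ∀ x y : X, π x * Q x y = π y * Q y x)
    (r : ℝ) (hr : 1 ≤ r)
    (f : X → ℝ) (hf : ∀ x, 0 < f x) (hreg : IsRRegular Q r f) :
     dirichletForm π Q f (fun x => Real.log (f x)) ≤
      Hfun r * dirichletForm π Q (fun x => Real.sqrt (f x)) (fun x => Real.sqrt (f x)) := by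
  simp only [dirichletForm]
  have hterm : ∀ x y : X,
      π x * Q x y * (f x - f y) * (Real.log (f x) - Real.log (f y)) ≤
      Hfun r * (π x * Q x y * (Real.sqrt (f x) - Real.sqrt (f y)) *
        (Real.sqrt (f x) - Real.sqrt (f y))) := by
    intro x y
    by_cases hxy : x = y
    · subst hxy; simp
    · rcases lt_or_eq_of_le (hQ x y hxy) with hpos | h0
      · have hyx : 0 < Q y x := by
          have hre := hrev x y
          have h1 : 0 < π x * Q x y := mul_pos (hπpos x) hpos
          rw [hre] at h1
          by_contra hc
          push_neg at hc
          nlinarith [hπpos y]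
        have h1 := hreg x y hxy hpos
        have h2 := hreg y x (Ne.symm hxy) hyx
        have hp := pointwise hr (hf x) (hf y) h1 h2
        have hc : 0 ≤ π x * Q x y := mul_nonneg (hπpos x).le hpos.le
        calc π x * Q x y * (f x - f y) * (Real.log (f x) - Real.log (f y))
            = π x * Q x y * ((f x - f y) * (Real.log (f x) - Real.log (f y))) := by ring
          _ ≤ π x * Q x y * (Hfun r * ((Real.sqrt (f x) - Real.sqrt (f y)) *
                (Real.sqrt (f x) - Real.sqrt (f y)))) := mul_le_mul_of_nonneg_left hp hc
          _ = Hfun r * (π x * Q x y * (Real.sqrt (f x) - Real.sqrt (f y)) *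
                (Real.sqrt (f x) - Real.sqrt (f y))) := by ring
      · rw [← h0]; simp
  calc (1 / 2) * ∑ x : X, ∑ y : X,
          π x * Q x y * (f x - f y) * (Real.log (f x) - Real.log (f y))
      ≤ (1 / 2) * ∑ x : X, ∑ y : X, Hfun r * (π x * Q x y *
          (Real.sqrt (f x) - Real.sqrt (f y)) * (Real.sqrt (f x) - Real.sqrt (f y))) := by
        apply mul_le_mul_of_nonneg_left _ (by norm_num : (0:ℝ) ≤ 1 / 2)
        exact Finset.sum_le_sum fun x _ => Finset.sum_le_sum fun y _ => hterm x y
    _ = Hfun r * ((1 / 2) * ∑ x : X, ∑ y : X, π x * Q x y *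
          (Real.sqrt (f x) - Real.sqrt (f y)) * (Real.sqrt (f x) - Real.sqrt (f y))) := by
        simp only [← Finset.mul_sum]; ring


end
end

section
/- Let r ≥ 1, f : X → (0,∞), and f_⋆(x) := max_{z∈X} r^{−d(x,z)}·f(z). For each edge e = (x,y) ∈ E with f_⋆(x) ≤ f_⋆(y), there exists an edge e' = (x',y') ∈ E such that r^{−d(e,e')}·f(x') ≤ f_⋆(x) ≤ f_⋆(y) ≤ r^{−d(e,e')}·f(y'). -/
open Finset

noncomputable section

variable {X : Type*} [Fintype X] [DecidableEq X] [Nonempty X]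

set_option linter.unusedSectionVars false in
lemma walk_of_chain {G : SimpleGraph X} (m : ℕ) (c : ℕ → X)
    (h : ∀ i < m, G.Adj (c i) (c (i+1))) :
    ∃ w : G.Walk (c 0) (c m), w.length ≤ m := by
  induction m with
  | zero => exact ⟨SimpleGraph.Walk.nil, le_refl 0⟩
  | succ m ih =>
    obtain ⟨w, hw⟩ := ih (fun i hi => h i (hi.trans (Nat.lt_succ_self m)))
    exact ⟨w.concat (h m (Nat.lt_succ_self m)),
      by simp [SimpleGraph.Walk.length_concat]; omega⟩

set_option linter.unusedSectionVars false in
lemma adj_pos_of_rev (π : X → ℝ) (Q : X → X → ℝ)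
    (hπpos : ∀ x : X, 0 < π x)
    (hrev : ∀ x y : X, π x * Q x y = π y * Q y x)
    {a b : X} (h : (chainGraph Q).Adj a b) : 0 < Q a b := by
  rcases h.2 with h2 | h2
  · exact h2
  · have := hrev b a
    nlinarith [hπpos a, hπpos b]

/-- The set defining `edgeDist` is nonempty, given both are edges and irreducibility. -/
lemma edgeDist_set_nonempty (π : X → ℝ) (Q : X → X → ℝ)
    (hirr : MarkovIrreducible Q)
    {e e' : X × X} (he : IsEdge Q e) (he' : IsEdge Q e') :
    {n : ℕ | ∃ c : ℕ → X, c 0 = e.1 ∧ c 1 = e.2 ∧ c n = e'.1 ∧ c (n + 1) = e'.2 ∧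
      ∀ i < n + 1, (chainGraph Q).Adj (c i) (c (i + 1))}.Nonempty := by
  have hreach : (chainGraph Q).Reachable e.2 e'.1 := by
    rw [SimpleGraph.reachable_iff_reflTransGen]
    exact Relation.ReflTransGen.mono (fun a b h => ⟨h.1, Or.inl h.2⟩) _ _ (hirr e.2 e'.1)
  obtain ⟨w⟩ := hreach
  refine ⟨w.length + 1, fun i => if i = 0 then e.1 else
      if i ≤ w.length + 1 then w.getVert (i - 1) else e'.2, by simp, ?_, ?_, ?_, ?_⟩
  · simp
  · simp
  · simp
  · intro i hi
    rcases Nat.eq_zero_or_pos i with rfl | hpos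
    · have hA : (chainGraph Q).Adj e.1 e.2 := ⟨he.1, Or.inl he.2⟩
      simpa using hA
    · rcases eq_or_lt_of_le (Nat.succ_le_of_lt hi) with heq | hlt
      · have hieq : i = w.length + 1 := by omega
        subst hieq
        simp only [Nat.add_sub_cancel]
        have : ¬ (w.length + 1 + 1 ≤ w.length + 1) := by omega
        simp only [if_neg (by omega : ¬ (w.length + 1 = 0)), if_pos le_rfl,
          if_neg (by omega : ¬ (w.length + 1 + 1 = 0)), if_neg this,
          SimpleGraph.Walk.getVert_length]
        exact ⟨he'.1, Or.inl he'.2⟩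
      · have h1 : i ≤ w.length := by omega
        simp only [if_neg (by omega : ¬ i = 0), if_pos (by omega : i ≤ w.length + 1),
          if_neg (by omega : ¬ i + 1 = 0), if_pos (by omega : i + 1 ≤ w.length + 1),
          Nat.add_sub_cancel]
        have := w.adj_getVert_succ (i := i - 1) (by omega)
        have h2 : i - 1 + 1 = i := by omega
        rwa [h2] at this

set_option linter.unusedSectionVars false in
/-- Lower bound: `edgeDist e e' ≥ graphDist e.1 e'.1`. -/
lemma graphDist_le_edgeDist (π : X → ℝ) (Q : X → X → ℝ)
    (hirr : MarkovIrreducible Q)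
    {e e' : X × X} (he : IsEdge Q e) (he' : IsEdge Q e') :
    graphDist Q e.1 e'.1 ≤ edgeDist Q e e' := by
  have hmem := Nat.sInf_mem (edgeDist_set_nonempty π Q hirr he he')
  obtain ⟨c, hc0, _, hcn, _, hadj⟩ := hmem
  obtain ⟨w, hw⟩ := walk_of_chain (G := chainGraph Q) (edgeDist Q e e') c
    (fun i hi => hadj i (Nat.lt_succ_of_lt hi))
  have hdist := SimpleGraph.dist_le w
  have hcn' : c (edgeDist Q e e') = e'.1 := hcn
  have heq : graphDist Q e.1 e'.1 = (chainGraph Q).dist (c 0) (c (edgeDist Q e e')) := by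
    rw [hc0, hcn']; rfl
  rw [heq]
  exact le_trans hdist hw

theorem fStar_local_comparison
    (π : X → ℝ) (Q : X → X → ℝ)
    (hQ : ∀ x y : X, x ≠ y → 0 ≤ Q x y)
    (hQsum : ∀ x : X, ∑ y : X, Q x y = 0)
    (hirr : MarkovIrreducible Q)
    (hπpos : ∀ x : X, 0 < π x)
    (hπsum : ∑ x : X, π x = 1)
    (hrev : ∀ x y : X, π x * Q x y = π y * Q y x)
    (r : ℝ) (hr : 1 ≤ r) (f : X → ℝ) (hf : ∀ x, 0 < f x)
    (x y : X) (hxy : IsEdge Q (x, y)) (hord : fStar Q r f x ≤ fStar Q r f y) :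
     ∃ x' y' : X, IsEdge Q (x', y') ∧
      r ^ (-(edgeDist Q (x, y) (x', y') : ℤ)) * f x' ≤ fStar Q r f x ∧
      fStar Q r f x ≤ fStar Q r f y ∧
      fStar Q r f y ≤ r ^ (-(edgeDist Q (x, y) (x', y') : ℤ)) * f y' := by
  classical
  have hr0 : (0:ℝ) < r := lt_of_lt_of_le one_pos hr
  -- the x'-bound holds for every edge
  have key_x : ∀ x' y' : X, IsEdge Q (x', y') →
      r ^ (-(edgeDist Q (x, y) (x', y') : ℤ)) * f x' ≤ fStar Q r f x := by
    intro x' y' he'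
    have hd : graphDist Q x x' ≤ edgeDist Q (x, y) (x', y') :=
      graphDist_le_edgeDist π Q hirr hxy he'
    have hpow : r ^ (-(edgeDist Q (x,y) (x',y') : ℤ)) ≤ r ^ (-(graphDist Q x x' : ℤ)) :=
      zpow_le_zpow_right₀ hr (by exact_mod_cast neg_le_neg (Int.ofNat_le.mpr hd))
    calc r ^ (-(edgeDist Q (x,y) (x',y') : ℤ)) * f x'
        ≤ r ^ (-(graphDist Q x x' : ℤ)) * f x' :=
          mul_le_mul_of_nonneg_right hpow (le_of_lt (hf x'))
      _ ≤ fStar Q r f x :=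
          Finset.le_sup' (fun z => r ^ (-(graphDist Q x z : ℤ)) * f z) (mem_univ x')
  obtain ⟨z, -, hz⟩ := Finset.exists_mem_eq_sup' (univ_nonempty (α := X))
    (fun z => r ^ (-(graphDist Q y z : ℤ)) * f z)
  have hfy : fStar Q r f y = r ^ (-(graphDist Q y z : ℤ)) * f z := hz
  set k := graphDist Q y z with hk
  have hadjxy : (chainGraph Q).Adj x y := ⟨hxy.1, Or.inl hxy.2⟩
  rcases Nat.eq_zero_or_pos k with hk0 | hkpos
  · -- z is at distance 0 from y, so z = y; take e' = (x, y)
    have hreach : (chainGraph Q).Reachable y z := by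
      rw [SimpleGraph.reachable_iff_reflTransGen]
      exact Relation.ReflTransGen.mono (fun a b h => ⟨h.1, Or.inl h.2⟩) _ _ (hirr y z)
    have hzy : y = z := by
      rcases SimpleGraph.dist_eq_zero_iff_eq_or_not_reachable.mp hk0 with h | h
      · exact h
      · exact absurd hreach h
    have hde : edgeDist Q (x, y) (x, y) = 0 := by
      have h0 : 0 ∈ {n : ℕ | ∃ c : ℕ → X, c 0 = (x,y).1 ∧ c 1 = (x,y).2 ∧
          c n = (x,y).1 ∧ c (n + 1) = (x,y).2 ∧
          ∀ i < n + 1, (chainGraph Q).Adj (c i) (c (i + 1))} := by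
        refine ⟨fun i => if i = 0 then x else y, by simp, by simp, by simp, by simp, ?_⟩
        intro i hi
        interval_cases i
        simpa using hadjxy
      exact Nat.le_zero.mp (Nat.sInf_le h0)
    refine ⟨x, y, hxy, key_x x y hxy, hord, ?_⟩
    rw [hde]
    have : fStar Q r f y = f y := by
      rw [hfy, ← hzy, hk0]; simp
    rw [this]; simp
  · -- take the last edge of a geodesic from y to z
    have hreach : (chainGraph Q).Reachable y z := by
      rw [SimpleGraph.reachable_iff_reflTransGen]
      exact Relation.ReflTransGen.mono (fun a b h => ⟨h.1, Or.inl h.2⟩) _ _ (hirr y z)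
    obtain ⟨w, hwlen⟩ := hreach.exists_walk_length_eq_dist
    set x' := w.getVert (k - 1) with hx'
    set y' := w.getVert k with hy'
    have hwl : w.length = k := hwlen
    have hadj' : (chainGraph Q).Adj x' y' := by
      have := w.adj_getVert_succ (i := k - 1) (by omega)
      rwa [show k - 1 + 1 = k by omega] at this
    have he' : IsEdge Q (x', y') := ⟨hadj'.1, adj_pos_of_rev π Q hπpos hrev hadj'⟩
    have hzy' : y' = z := by rw [hy', ← hwl]; exact w.getVert_length
    have hde : edgeDist Q (x, y) (x', y') ≤ k := by
      apply Nat.sInf_le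
      refine ⟨fun i => if i = 0 then x else w.getVert (i - 1), by simp, by simp, ?_, ?_, ?_⟩
      · simp only [if_neg (by omega : ¬ k = 0)]
        exact hx'.symm
      · simp only [if_neg (by omega : ¬ k + 1 = 0), Nat.add_sub_cancel, hy']
      · intro i hi
        rcases Nat.eq_zero_or_pos i with rfl | hpos
        · simpa using hadjxy
        · simp only [if_neg (by omega : ¬ i = 0), if_neg (by omega : ¬ i + 1 = 0),
            Nat.add_sub_cancel]
          have := w.adj_getVert_succ (i := i - 1) (by omega)
          rwa [show i - 1 + 1 = i by omega] at this
    refine ⟨x', y', he', key_x x' y' he', hord, ?_⟩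
    have hpow : r ^ (-(k : ℤ)) ≤ r ^ (-(edgeDist Q (x,y) (x',y') : ℤ)) :=
      zpow_le_zpow_right₀ hr (by exact_mod_cast neg_le_neg (Int.ofNat_le.mpr hde))
    calc fStar Q r f y = r ^ (-(k : ℤ)) * f y' := by rw [hfy, hzy']
      _ ≤ r ^ (-(edgeDist Q (x,y) (x',y') : ℤ)) * f y' :=
          mul_le_mul_of_nonneg_right hpow (le_of_lt (hf y'))

end
end

section
/- Let r ≥ 1, f : X → (0,∞), and f_⋆(x) := max_{z∈X} r^{−d(x,z)}·f(z). Define κ := max over e' ∈ E of (1/c(e'))·Σ_{e∈E} c(e)·r^{−d(e,e')}, where c(x,y) := π(x)Q(x,y). Then E(√f_⋆, √f_⋆) ≤ κ·E(√f, √f) and E(f_⋆, log f_⋆) ≤ κ·E(f, log f). -/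
open Finset

noncomputable section

variable {X : Type*} [Fintype X] [DecidableEq X] [Nonempty X]

section AuxProofs

variable {π : X → ℝ} {Q : X → X → ℝ}

lemma mem_edges_iff {e : X × X} : e ∈ edges Q ↔ e.1 ≠ e.2 ∧ 0 < Q e.1 e.2 := by
  simp [edges]

lemma Qpos_symm (hπpos : ∀ x : X, 0 < π x) (hrev : ∀ x y : X, π x * Q x y = π y * Q y x)
    {x y : X} (h : 0 < Q x y) : 0 < Q y x := by
  have h1 : 0 < π y * Q y x := by rw [← hrev]; exact mul_pos (hπpos x) h
  nlinarith [hπpos y]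

lemma swap_mem_edges (hπpos : ∀ x : X, 0 < π x) (hrev : ∀ x y : X, π x * Q x y = π y * Q y x)
    {e : X × X} (he : e ∈ edges Q) : e.swap ∈ edges Q := by
  rw [mem_edges_iff] at he ⊢
  exact ⟨Ne.symm he.1, Qpos_symm hπpos hrev he.2⟩

lemma edgeWeight_swap (hrev : ∀ x y : X, π x * Q x y = π y * Q y x) (e : X × X) :
    edgeWeight π Q e.swap = edgeWeight π Q e := by
  simp only [edgeWeight, Prod.snd_swap, Prod.fst_swap]
  exact (hrev e.1 e.2).symm

lemma edgeWeight_pos (hπpos : ∀ x : X, 0 < π x) {e : X × X} (he : e ∈ edges Q) :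
    0 < edgeWeight π Q e :=
  mul_pos (hπpos e.1) ((mem_edges_iff.mp he).2)

lemma chainGraph_connected (hirr : MarkovIrreducible Q) : (chainGraph Q).Connected := by
  rw [SimpleGraph.connected_iff]
  refine ⟨fun x y => ?_, inferInstance⟩
  induction hirr x y with
  | refl => exact SimpleGraph.Reachable.refl x
  | tail _ hstep ih => exact ih.trans (SimpleGraph.Adj.reachable ⟨hstep.1, Or.inl hstep.2⟩)

lemma fStar_ge (r : ℝ) (f : X → ℝ) (x z : X) :
    r ^ (-(graphDist Q x z : ℤ)) * f z ≤ fStar Q r f x :=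
  Finset.le_sup' (fun z => r ^ (-(graphDist Q x z : ℤ)) * f z) (mem_univ z)

lemma fStar_ge_self (r : ℝ) (f : X → ℝ) (x : X) : f x ≤ fStar Q r f x := by
  have h := fStar_ge (Q := Q) r f x x
  rwa [graphDist, SimpleGraph.dist_self, Nat.cast_zero, neg_zero, zpow_zero, one_mul] at h

lemma fStar_pos (r : ℝ) (f : X → ℝ) (hf : ∀ x, 0 < f x) (x : X) : 0 < fStar Q r f x :=
  lt_of_lt_of_le (hf x) (fStar_ge_self r f x)

lemma fStar_exists (r : ℝ) (f : X → ℝ) (x : X) :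
    ∃ z : X, fStar Q r f x = r ^ (-(graphDist Q x z : ℤ)) * f z := by
  obtain ⟨z, _, hz⟩ := Finset.exists_mem_eq_sup' (univ_nonempty (α := X))
    (fun z => r ^ (-(graphDist Q x z : ℤ)) * f z)
  exact ⟨z, hz⟩

lemma dist_getVert_le {G : SimpleGraph X} (hconn : G.Connected) {u v : X} (p : G.Walk u v) :
    ∀ i : ℕ, G.dist u (p.getVert i) ≤ i := by
  intro i
  induction i with
  | zero => simp [SimpleGraph.Walk.getVert_zero, SimpleGraph.dist_self]
  | succ n ih =>
    by_cases hn : n < p.length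
    · have hadj := p.adj_getVert_succ hn
      have h1 : G.dist (p.getVert n) (p.getVert (n + 1)) ≤ 1 := SimpleGraph.dist_le hadj.toWalk
      have h2 := hconn.dist_triangle (u := u) (v := p.getVert n) (w := p.getVert (n + 1))
      omega
    · push_neg at hn
      have e1 : p.getVert (n + 1) = v := p.getVert_of_length_le (hn.trans (Nat.le_succ n))
      have e2 : p.getVert n = v := p.getVert_of_length_le hn
      rw [e1, ← e2]
      exact ih.trans (Nat.le_succ n)

lemma edgeDist_le_of_seq {e e' : X × X} {n : ℕ} (c : ℕ → X)
    (h0 : c 0 = e.1) (h1 : c 1 = e.2) (hn : c n = e'.1) (hn1 : c (n + 1) = e'.2)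
    (hadj : ∀ i < n + 1, (chainGraph Q).Adj (c i) (c (i + 1))) :
    edgeDist Q e e' ≤ n :=
  Nat.sInf_le ⟨c, h0, h1, hn, hn1, hadj⟩

lemma edgeDist_self {e : X × X} (he : e ∈ edges Q) : edgeDist Q e e = 0 := by
  have h : edgeDist Q e e ≤ 0 := by
    apply edgeDist_le_of_seq (fun i => if i = 0 then e.1 else e.2) rfl rfl rfl rfl
    intro i hi
    interval_cases i
    simp only [if_pos rfl, if_neg one_ne_zero]
    obtain ⟨hne, hQ⟩ := mem_edges_iff.mp he
    exact ⟨hne, Or.inl hQ⟩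
  omega

lemma le_kappa (r : ℝ) {t : X × X} (ht : t ∈ edges Q) :
    (1 / edgeWeight π Q t) * ∑ e ∈ edges Q, edgeWeight π Q e * r ^ (-(edgeDist Q e t : ℤ))
      ≤ kappa π Q r := by
  have hset : {k : ℝ | ∃ e' ∈ edges Q, k = (1 / edgeWeight π Q e') *
      ∑ e ∈ edges Q, edgeWeight π Q e * r ^ (-(edgeDist Q e e' : ℤ))}
      = ↑((edges Q).image (fun e' => (1 / edgeWeight π Q e') *
      ∑ e ∈ edges Q, edgeWeight π Q e * r ^ (-(edgeDist Q e e' : ℤ)))) := by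
    ext k
    simp only [Finset.coe_image, Set.mem_image, Finset.mem_coe, Set.mem_setOf_eq]
    constructor
    · rintro ⟨e', he', rfl⟩; exact ⟨e', he', rfl⟩
    · rintro ⟨e', he', rfl⟩; exact ⟨e', he', rfl⟩
  apply le_csSup
  · rw [hset]; exact Finset.bddAbove _
  · exact ⟨t, ht, rfl⟩

lemma sum_le_kappa_mul (hπpos : ∀ x : X, 0 < π x) (r : ℝ) {t : X × X} (ht : t ∈ edges Q) :
    ∑ e ∈ edges Q, edgeWeight π Q e * r ^ (-(edgeDist Q e t : ℤ))
      ≤ kappa π Q r * edgeWeight π Q t := by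
  have hc : 0 < edgeWeight π Q t := edgeWeight_pos hπpos ht
  have h := le_kappa (π := π) r ht
  calc ∑ e ∈ edges Q, edgeWeight π Q e * r ^ (-(edgeDist Q e t : ℤ))
      = edgeWeight π Q t * ((1 / edgeWeight π Q t) *
        ∑ e ∈ edges Q, edgeWeight π Q e * r ^ (-(edgeDist Q e t : ℤ))) := by
        field_simp
    _ ≤ edgeWeight π Q t * kappa π Q r := mul_le_mul_of_nonneg_left h hc.le
    _ = kappa π Q r * edgeWeight π Q t := mul_comm _ _

lemma kappa_nonneg (hπpos : ∀ x : X, 0 < π x) {r : ℝ} (hr : 0 < r)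
    (hE : (edges Q).Nonempty) : 0 ≤ kappa π Q r := by
  obtain ⟨t, ht⟩ := hE
  refine le_trans ?_ (le_kappa (π := π) r ht)
  have hct := edgeWeight_pos hπpos ht
  apply mul_nonneg
  · positivity
  · apply Finset.sum_nonneg
    intro e he
    exact mul_nonneg (edgeWeight_pos hπpos he).le (zpow_pos hr _).le

lemma dirichletForm_eq_sum_edges (hQ : ∀ x y : X, x ≠ y → 0 ≤ Q x y) (u v : X → ℝ) :
    dirichletForm π Q u v
      = (1 / 2) * ∑ e ∈ edges Q, edgeWeight π Q e * ((u e.1 - u e.2) * (v e.1 - v e.2)) := by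
  rw [dirichletForm]
  congr 1
  have h1 : ∑ e ∈ (univ : Finset (X × X)), π e.1 * Q e.1 e.2 * (u e.1 - u e.2) * (v e.1 - v e.2)
      = ∑ x : X, ∑ y : X, π x * Q x y * (u x - u y) * (v x - v y) := by
    rw [← Finset.univ_product_univ, Finset.sum_product]
  rw [← h1, edges]
  have h2 : ∑ e ∈ univ.filter (fun e : X × X => e.1 ≠ e.2 ∧ 0 < Q e.1 e.2),
        edgeWeight π Q e * ((u e.1 - u e.2) * (v e.1 - v e.2))
      = ∑ e ∈ univ.filter (fun e : X × X => e.1 ≠ e.2 ∧ 0 < Q e.1 e.2),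
        π e.1 * Q e.1 e.2 * (u e.1 - u e.2) * (v e.1 - v e.2) :=
    Finset.sum_congr rfl (fun e _ => by rw [edgeWeight]; ring)
  rw [h2]
  refine (Finset.sum_filter_of_ne ?_).symm
  intro e _ hne
  by_contra hcon
  apply hne
  rcases eq_or_ne e.1 e.2 with heq | hneq
  · rw [heq]; simp [sub_self]
  · have hQ0 : Q e.1 e.2 = 0 := by
      have hnpos : ¬ 0 < Q e.1 e.2 := fun h => hcon ⟨hneq, h⟩
      linarith [hQ e.1 e.2 hneq]
    rw [hQ0]; ring

end AuxProofs

section ChargeLemma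

variable {π : X → ℝ} {Q : X → X → ℝ}

lemma charge_lemma
    (hirr : MarkovIrreducible Q)
    (hπpos : ∀ x : X, 0 < π x)
    (hrev : ∀ x y : X, π x * Q x y = π y * Q y x)
    {r : ℝ} (hr1 : 1 < r) {f : X → ℝ} (hf : ∀ x, 0 < f x)
    (D : ℝ → ℝ → ℝ)
    (hnn : ∀ a b : ℝ, 0 < a → 0 < b → 0 ≤ D a b)
    (hmono : ∀ A B C : ℝ, 0 < C → C ≤ B → B ≤ A → D A B ≤ D A C)
    (hscale : ∀ s a b : ℝ, 0 < s → 0 < a → 0 < b → D (s * a) (s * b) = s * D a b)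
    {e : X × X} (he : e ∈ edges Q) (hlt : fStar Q r f e.2 < fStar Q r f e.1) :
    ∃ t ∈ edges Q, f t.1 < f t.2 ∧
      D (fStar Q r f e.1) (fStar Q r f e.2)
        ≤ r ^ (-(edgeDist Q e.swap t : ℤ)) * D (f t.2) (f t.1) := by
  obtain ⟨hx_ne, hxQ⟩ := mem_edges_iff.mp he
  have hconn := chainGraph_connected hirr
  have hr0 : (0 : ℝ) < r := lt_trans zero_lt_one hr1
  obtain ⟨z, hz⟩ := fStar_exists (Q := Q) r f e.1
  set x := e.1 with hxdef
  set y := e.2 with hydef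
  set k := graphDist Q x z with hkdef
  have hadj_xy : (chainGraph Q).Adj x y := ⟨hx_ne, Or.inl hxQ⟩
  by_cases hk0 : k = 0
  · -- case k = 0 : z = x and fStar x = f x
    have hzx : x = z := by
      have hd : (chainGraph Q).dist x z = 0 := hk0
      exact hconn.dist_eq_zero_iff.mp hd
    have hgxx : fStar Q r f x = f x := by
      rw [hz, hk0, ← hzx]
      norm_num
    have hswap : e.swap ∈ edges Q := swap_mem_edges hπpos hrev he
    refine ⟨e.swap, hswap, ?_, ?_⟩
    · show f y < f x
      calc f y ≤ fStar Q r f y := fStar_ge_self r f y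
        _ < fStar Q r f x := hlt
        _ = f x := hgxx
    · rw [edgeDist_self hswap]
      norm_num
      show D (fStar Q r f x) (fStar Q r f y) ≤ D (f x) (f y)
      have hstep : D (fStar Q r f x) (fStar Q r f y) ≤ D (fStar Q r f x) (f y) :=
        hmono _ _ _ (hf y) (fStar_ge_self r f y) hlt.le
      rw [hgxx] at hstep ⊢
      exact hstep
  · -- case k ≥ 1
    have hkpos : 0 < k := Nat.pos_of_ne_zero hk0
    obtain ⟨p, hp⟩ := hconn.exists_walk_length_eq_dist x z
    have hplen : p.length = k := hp
    set w := p.getVert (k - 1) with hwdef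
    have hk1lt : k - 1 < p.length := by omega
    have hadj_wz : (chainGraph Q).Adj w z := by
      have h := p.adj_getVert_succ hk1lt
      have hsucc : k - 1 + 1 = k := by omega
      rw [hsucc] at h
      have hgl : p.getVert k = z := by
        rw [← hplen]; exact p.getVert_length
      rwa [hgl] at h
    have hQwz : 0 < Q w z := by
      rcases hadj_wz.2 with h | h
      · exact h
      · exact Qpos_symm hπpos hrev h
    have ht : (w, z) ∈ edges Q := mem_edges_iff.mpr ⟨hadj_wz.1, hQwz⟩
    have hdxw : (chainGraph Q).dist x w ≤ k - 1 := dist_getVert_le hconn p (k - 1)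
    have hdyw : (chainGraph Q).dist y w ≤ k := by
      have h1 : (chainGraph Q).dist y x ≤ 1 := SimpleGraph.dist_le hadj_xy.symm.toWalk
      have h2 := hconn.dist_triangle (u := y) (v := x) (w := w)
      omega
    have hgy_ge : r ^ (-(k : ℤ)) * f w ≤ fStar Q r f y := by
      refine le_trans ?_ (fStar_ge r f y w)
      apply mul_le_mul_of_nonneg_right _ (hf w).le
      apply zpow_le_zpow_right₀ hr1.le
      have : (graphDist Q y w : ℤ) ≤ (k : ℤ) := by exact_mod_cast hdyw
      omega
    have hfwz : r * f w ≤ f z := by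
      have hmle : r ^ (-((k - 1 : ℕ) : ℤ)) * f w ≤ fStar Q r f x := by
        refine le_trans ?_ (fStar_ge r f x w)
        apply mul_le_mul_of_nonneg_right _ (hf w).le
        apply zpow_le_zpow_right₀ hr1.le
        have : (graphDist Q x w : ℤ) ≤ ((k - 1 : ℕ) : ℤ) := by exact_mod_cast hdxw
        omega
      rw [hz] at hmle
      have hcast : -((k - 1 : ℕ) : ℤ) = -(k : ℤ) + 1 := by
        have : ((k - 1 : ℕ) : ℤ) = (k : ℤ) - 1 := by
          have := hkpos; omega
        omega
      rw [hcast, zpow_add₀ (ne_of_gt hr0), zpow_one] at hmle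
      have hpow : 0 < r ^ (-(k : ℤ)) := zpow_pos hr0 _
      have hmle' : r ^ (-(k : ℤ)) * (r * f w) ≤ r ^ (-(k : ℤ)) * f z := by
        calc r ^ (-(k : ℤ)) * (r * f w) = r ^ (-(k : ℤ)) * r * f w := by ring
          _ ≤ r ^ (-(k : ℤ)) * f z := hmle
      exact le_of_mul_le_mul_left hmle' hpow
    have hfw_lt : f w < f z := by nlinarith [hf w]
    refine ⟨(w, z), ht, hfw_lt, ?_⟩
    have hstep1 : D (fStar Q r f x) (fStar Q r f y) ≤ D (fStar Q r f x) (r ^ (-(k : ℤ)) * f w) :=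
      hmono _ _ _ (mul_pos (zpow_pos hr0 _) (hf w)) hgy_ge hlt.le
    have hstep2 : D (fStar Q r f x) (r ^ (-(k : ℤ)) * f w) = r ^ (-(k : ℤ)) * D (f z) (f w) := by
      rw [hz]; exact hscale _ _ _ (zpow_pos hr0 _) (hf z) (hf w)
    have hed : edgeDist Q e.swap (w, z) ≤ k := by
      apply edgeDist_le_of_seq ((SimpleGraph.Walk.cons hadj_xy.symm p).getVert)
      · exact SimpleGraph.Walk.getVert_zero _
      · show (SimpleGraph.Walk.cons hadj_xy.symm p).getVert 1 = x
        rw [SimpleGraph.Walk.getVert_cons_succ, SimpleGraph.Walk.getVert_zero]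
      · show (SimpleGraph.Walk.cons hadj_xy.symm p).getVert k = w
        have hsucc : k = (k - 1) + 1 := by omega
        rw [hsucc, SimpleGraph.Walk.getVert_cons_succ]
      · show (SimpleGraph.Walk.cons hadj_xy.symm p).getVert (k + 1) = z
        have hlen : (SimpleGraph.Walk.cons hadj_xy.symm p).length = k + 1 := by
          rw [SimpleGraph.Walk.length_cons, hplen]
        rw [← hlen]
        exact SimpleGraph.Walk.getVert_length _
      · intro i hi
        apply SimpleGraph.Walk.adj_getVert_succ
        rw [SimpleGraph.Walk.length_cons, hplen]
        omega
    calc D (fStar Q r f x) (fStar Q r f y) ≤ r ^ (-(k : ℤ)) * D (f z) (f w) :=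
          hstep1.trans_eq hstep2
      _ ≤ r ^ (-(edgeDist Q e.swap (w, z) : ℤ)) * D (f z) (f w) := by
          apply mul_le_mul_of_nonneg_right _ (hnn _ _ (hf z) (hf w))
          apply zpow_le_zpow_right₀ hr1.le
          have : (edgeDist Q e.swap (w, z) : ℤ) ≤ (k : ℤ) := by exact_mod_cast hed
          omega
      _ = r ^ (-(edgeDist Q e.swap (w, z) : ℤ)) * D (f (w, z).2) (f (w, z).1) := rfl

end ChargeLemma

section MasterLemma

variable {π : X → ℝ} {Q : X → X → ℝ}

lemma master_sum_le
    (hirr : MarkovIrreducible Q)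
    (hπpos : ∀ x : X, 0 < π x)
    (hrev : ∀ x y : X, π x * Q x y = π y * Q y x)
    {r : ℝ} (hr : 1 ≤ r) {f : X → ℝ} (hf : ∀ x, 0 < f x)
    (D : ℝ → ℝ → ℝ)
    (hsym : ∀ a b : ℝ, 0 < a → 0 < b → D a b = D b a)
    (hdiag : ∀ a : ℝ, D a a = 0)
    (hnn : ∀ a b : ℝ, 0 < a → 0 < b → 0 ≤ D a b)
    (hmono : ∀ A B C : ℝ, 0 < C → C ≤ B → B ≤ A → D A B ≤ D A C)
    (hscale : ∀ s a b : ℝ, 0 < s → 0 < a → 0 < b → D (s * a) (s * b) = s * D a b) :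
    ∑ e ∈ edges Q, edgeWeight π Q e * D (fStar Q r f e.1) (fStar Q r f e.2)
      ≤ kappa π Q r * ∑ e ∈ edges Q, edgeWeight π Q e * D (f e.1) (f e.2) := by
  classical
  have hr0 : (0 : ℝ) < r := lt_of_lt_of_le zero_lt_one hr
  have hgpos : ∀ u : X, 0 < fStar Q r f u := fun u => fStar_pos r f hf u
  have hDfnn : ∀ e ∈ edges Q, (0 : ℝ) ≤ edgeWeight π Q e * D (f e.1) (f e.2) :=
    fun e he => mul_nonneg (edgeWeight_pos hπpos he).le (hnn _ _ (hf _) (hf _))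
  rcases (edges Q).eq_empty_or_nonempty with hE | hE
  · simp [hE]
  have hκnn : 0 ≤ kappa π Q r := kappa_nonneg hπpos hr0 hE
  rcases eq_or_lt_of_le hr with hr1 | hr1
  · -- r = 1 : fStar is constant
    have hconst : ∀ u : X, fStar Q r f u = univ.sup' univ_nonempty f := by
      intro u
      rw [fStar]
      apply Finset.sup'_congr _ rfl
      intro z _
      rw [← hr1]
      norm_num
    have hL0 : ∑ e ∈ edges Q, edgeWeight π Q e * D (fStar Q r f e.1) (fStar Q r f e.2) = 0 := by
      apply Finset.sum_eq_zero
      intro e _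
      rw [hconst e.1, hconst e.2, hdiag, mul_zero]
    rw [hL0]
    exact mul_nonneg hκnn (Finset.sum_nonneg hDfnn)
  -- main case r > 1
  set g := fStar Q r f with hgdef
  set SD := (edges Q).filter (fun e => g e.2 < g e.1) with hSDdef
  -- Step 1 : the star sum is twice the sum over strictly descending edges
  have hsplit : ∑ e ∈ edges Q, edgeWeight π Q e * D (g e.1) (g e.2)
      = 2 * ∑ e ∈ SD, edgeWeight π Q e * D (g e.1) (g e.2) := by
    have h1 := Finset.sum_filter_add_sum_filter_not (edges Q) (fun e => g e.2 < g e.1)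
      (fun e => edgeWeight π Q e * D (g e.1) (g e.2))
    have h2 : ∑ e ∈ (edges Q).filter (fun e => g e.1 < g e.2),
          edgeWeight π Q e * D (g e.1) (g e.2)
        = ∑ e ∈ (edges Q).filter (fun e => ¬ g e.2 < g e.1),
          edgeWeight π Q e * D (g e.1) (g e.2) := by
      apply Finset.sum_subset
      · intro e heM
        rw [Finset.mem_filter] at heM ⊢
        exact ⟨heM.1, not_lt_of_gt heM.2⟩
      · intro e heM heN
        rw [Finset.mem_filter] at heM
        have heq : g e.1 = g e.2 := by
          rw [Finset.mem_filter] at heN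
          have h3 : ¬ g e.1 < g e.2 := fun hcon => heN ⟨heM.1, hcon⟩
          have h4 : g e.1 ≤ g e.2 := not_lt.mp heM.2
          exact le_antisymm h4 (not_lt.mp h3)
        rw [heq, hdiag, mul_zero]
    have h3 : ∑ e ∈ (edges Q).filter (fun e => g e.1 < g e.2),
          edgeWeight π Q e * D (g e.1) (g e.2)
        = ∑ e ∈ SD, edgeWeight π Q e * D (g e.1) (g e.2) := by
      apply Finset.sum_nbij' (i := Prod.swap) (j := Prod.swap)
      · intro a ha
        rw [Finset.mem_filter] at ha ⊢
        exact ⟨swap_mem_edges hπpos hrev ha.1, ha.2⟩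
      · intro a ha
        rw [Finset.mem_filter] at ha ⊢
        exact ⟨swap_mem_edges hπpos hrev ha.1, ha.2⟩
      · intro a _; exact Prod.swap_swap a
      · intro a _; exact Prod.swap_swap a
      · intro a ha
        rw [Finset.mem_filter] at ha
        rw [edgeWeight_swap hrev, Prod.fst_swap, Prod.snd_swap,
          hsym _ _ (hgpos a.1) (hgpos a.2)]
    rw [← h1, ← h2, h3]
    ring
  -- Step 2 : charging map
  have hcharge : ∀ e ∈ SD, ∃ t ∈ edges Q, f t.1 < f t.2 ∧
      D (g e.1) (g e.2) ≤ r ^ (-(edgeDist Q e.swap t : ℤ)) * D (f t.2) (f t.1) := by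
    intro e heSD
    rw [hSDdef, Finset.mem_filter] at heSD
    exact charge_lemma hirr hπpos hrev hr1 hf D hnn hmono hscale heSD.1 heSD.2
  have hchoice : ∀ e : X × X, ∃ t : X × X, e ∈ SD →
      t ∈ edges Q ∧ f t.1 < f t.2 ∧
      D (g e.1) (g e.2) ≤ r ^ (-(edgeDist Q e.swap t : ℤ)) * D (f t.2) (f t.1) := by
    intro e
    by_cases heSD : e ∈ SD
    · obtain ⟨t, ht1, ht2, ht3⟩ := hcharge e heSD
      exact ⟨t, fun _ => ⟨ht1, ht2, ht3⟩⟩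
    · exact ⟨e, fun h => absurd h heSD⟩
  choose φ hφ using hchoice
  set CAN := (edges Q).filter (fun t => f t.1 < f t.2) with hCANdef
  have hφCAN : ∀ e ∈ SD, φ e ∈ CAN := fun e heSD =>
    Finset.mem_filter.mpr ⟨(hφ e heSD).1, (hφ e heSD).2.1⟩
  -- Step 3 : termwise bound on SD
  have hstep : ∑ e ∈ SD, edgeWeight π Q e * D (g e.1) (g e.2)
      ≤ ∑ e ∈ SD, edgeWeight π Q e *
        (r ^ (-(edgeDist Q e.swap (φ e) : ℤ)) * D (f (φ e).2) (f (φ e).1)) := by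
    apply Finset.sum_le_sum
    intro e heSD
    have heE : e ∈ edges Q := (Finset.mem_filter.mp heSD).1
    exact mul_le_mul_of_nonneg_left ((hφ e heSD).2.2) (edgeWeight_pos hπpos heE).le
  -- Step 4 : fiberwise regrouping over canonical target edges
  have hfiber : ∑ e ∈ SD, edgeWeight π Q e *
        (r ^ (-(edgeDist Q e.swap (φ e) : ℤ)) * D (f (φ e).2) (f (φ e).1))
      = ∑ t ∈ CAN, ∑ e ∈ SD.filter (fun e => φ e = t), edgeWeight π Q e *
        (r ^ (-(edgeDist Q e.swap (φ e) : ℤ)) * D (f (φ e).2) (f (φ e).1)) :=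
    (Finset.sum_fiberwise_of_maps_to hφCAN _).symm
  have hinner : ∀ t ∈ CAN, ∑ e ∈ SD.filter (fun e => φ e = t), edgeWeight π Q e *
        (r ^ (-(edgeDist Q e.swap (φ e) : ℤ)) * D (f (φ e).2) (f (φ e).1))
      ≤ kappa π Q r * (edgeWeight π Q t * D (f t.1) (f t.2)) := by
    intro t htCAN
    have htE : t ∈ edges Q := (Finset.mem_filter.mp htCAN).1
    have hDft : (0 : ℝ) ≤ D (f t.2) (f t.1) := hnn _ _ (hf _) (hf _)
    have hkey : ∑ e ∈ SD.filter (fun e => φ e = t),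
          edgeWeight π Q e * r ^ (-(edgeDist Q e.swap t : ℤ))
        ≤ kappa π Q r * edgeWeight π Q t := by
      have hswapform : ∑ e ∈ SD.filter (fun e => φ e = t),
            edgeWeight π Q e * r ^ (-(edgeDist Q e.swap t : ℤ))
          = ∑ ε ∈ (SD.filter (fun e => φ e = t)).image Prod.swap,
            edgeWeight π Q ε * r ^ (-(edgeDist Q ε t : ℤ)) := by
        rw [Finset.sum_image (fun a _ b _ hab => Prod.swap_injective hab)]
        apply Finset.sum_congr rfl
        intro e _
        rw [edgeWeight_swap hrev]
      rw [hswapform]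
      refine le_trans (Finset.sum_le_sum_of_subset_of_nonneg ?_ ?_) (sum_le_kappa_mul hπpos r htE)
      · intro ε hε
        rw [Finset.mem_image] at hε
        obtain ⟨a, ha, rfl⟩ := hε
        have haE : a ∈ edges Q := (Finset.mem_filter.mp ((Finset.mem_filter.mp ha).1)).1
        exact swap_mem_edges hπpos hrev haE
      · intro ε hεE _
        exact mul_nonneg (edgeWeight_pos hπpos hεE).le (zpow_pos hr0 _).le
    calc ∑ e ∈ SD.filter (fun e => φ e = t), edgeWeight π Q e *
          (r ^ (-(edgeDist Q e.swap (φ e) : ℤ)) * D (f (φ e).2) (f (φ e).1))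
        = (∑ e ∈ SD.filter (fun e => φ e = t),
            edgeWeight π Q e * r ^ (-(edgeDist Q e.swap t : ℤ))) * D (f t.2) (f t.1) := by
          rw [Finset.sum_mul]
          apply Finset.sum_congr rfl
          intro e heF
          have heq : φ e = t := (Finset.mem_filter.mp heF).2
          rw [heq]; ring
      _ ≤ (kappa π Q r * edgeWeight π Q t) * D (f t.2) (f t.1) :=
          mul_le_mul_of_nonneg_right hkey hDft
      _ = kappa π Q r * (edgeWeight π Q t * D (f t.1) (f t.2)) := by
          rw [hsym (f t.2) (f t.1) (hf _) (hf _)]; ring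
  -- Step 5 : the canonical edges carry at most half of the total f-energy
  have hhalf : 2 * ∑ t ∈ CAN, edgeWeight π Q t * D (f t.1) (f t.2)
      ≤ ∑ e ∈ edges Q, edgeWeight π Q e * D (f e.1) (f e.2) := by
    set CAN' := (edges Q).filter (fun t => f t.2 < f t.1) with hCAN'def
    have hbij : ∑ t ∈ CAN, edgeWeight π Q t * D (f t.1) (f t.2)
        = ∑ t ∈ CAN', edgeWeight π Q t * D (f t.1) (f t.2) := by
      apply Finset.sum_nbij' (i := Prod.swap) (j := Prod.swap)
      · intro a ha
        rw [Finset.mem_filter] at ha ⊢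
        exact ⟨swap_mem_edges hπpos hrev ha.1, ha.2⟩
      · intro a ha
        rw [Finset.mem_filter] at ha ⊢
        exact ⟨swap_mem_edges hπpos hrev ha.1, ha.2⟩
      · intro a _; exact Prod.swap_swap a
      · intro a _; exact Prod.swap_swap a
      · intro a ha
        rw [edgeWeight_swap hrev, Prod.fst_swap, Prod.snd_swap,
          hsym _ _ (hf _) (hf _)]
    have hdisj : Disjoint CAN CAN' := by
      rw [Finset.disjoint_left]
      intro a haCAN haCAN'
      have h1 := (Finset.mem_filter.mp haCAN).2
      have h2 := (Finset.mem_filter.mp haCAN').2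
      exact absurd h1 (not_lt_of_gt h2)
    calc 2 * ∑ t ∈ CAN, edgeWeight π Q t * D (f t.1) (f t.2)
        = ∑ t ∈ CAN, edgeWeight π Q t * D (f t.1) (f t.2)
          + ∑ t ∈ CAN', edgeWeight π Q t * D (f t.1) (f t.2) := by rw [← hbij]; ring
      _ = ∑ t ∈ CAN ∪ CAN', edgeWeight π Q t * D (f t.1) (f t.2) :=
          (Finset.sum_union hdisj).symm
      _ ≤ ∑ e ∈ edges Q, edgeWeight π Q e * D (f e.1) (f e.2) := by
          apply Finset.sum_le_sum_of_subset_of_nonneg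
          · exact Finset.union_subset (Finset.filter_subset _ _) (Finset.filter_subset _ _)
          · intro e heE _
            exact hDfnn e heE
  -- Final assembly
  calc ∑ e ∈ edges Q, edgeWeight π Q e * D (g e.1) (g e.2)
      = 2 * ∑ e ∈ SD, edgeWeight π Q e * D (g e.1) (g e.2) := hsplit
    _ ≤ 2 * ∑ t ∈ CAN, kappa π Q r * (edgeWeight π Q t * D (f t.1) (f t.2)) := by
        have h := hstep.trans (le_of_eq hfiber)
        have h2 := h.trans (Finset.sum_le_sum hinner)
        linarith
    _ = kappa π Q r * (2 * ∑ t ∈ CAN, edgeWeight π Q t * D (f t.1) (f t.2)) := by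
        rw [← Finset.mul_sum]; ring
    _ ≤ kappa π Q r * ∑ e ∈ edges Q, edgeWeight π Q e * D (f e.1) (f e.2) :=
        mul_le_mul_of_nonneg_left hhalf hκnn

end MasterLemma

section DInstances

lemma Dsqrt_sym (a b : ℝ) (_ : 0 < a) (_ : 0 < b) :
    (Real.sqrt a - Real.sqrt b) * (Real.sqrt a - Real.sqrt b)
      = (Real.sqrt b - Real.sqrt a) * (Real.sqrt b - Real.sqrt a) := by ring

lemma Dsqrt_mono (A B C : ℝ) (hC : 0 < C) (hCB : C ≤ B) (hBA : B ≤ A) :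
    (Real.sqrt A - Real.sqrt B) * (Real.sqrt A - Real.sqrt B)
      ≤ (Real.sqrt A - Real.sqrt C) * (Real.sqrt A - Real.sqrt C) := by
  have h1 : Real.sqrt C ≤ Real.sqrt B := Real.sqrt_le_sqrt hCB
  have h2 : Real.sqrt B ≤ Real.sqrt A := Real.sqrt_le_sqrt hBA
  nlinarith

lemma Dsqrt_scale (s a b : ℝ) (hs : 0 < s) (ha : 0 < a) (hb : 0 < b) :
    (Real.sqrt (s * a) - Real.sqrt (s * b)) * (Real.sqrt (s * a) - Real.sqrt (s * b))
      = s * ((Real.sqrt a - Real.sqrt b) * (Real.sqrt a - Real.sqrt b)) := by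
  rw [Real.sqrt_mul hs.le a, Real.sqrt_mul hs.le b]
  have hss : Real.sqrt s * Real.sqrt s = s := Real.mul_self_sqrt hs.le
  nlinarith [hss]

lemma Dlog_sym (a b : ℝ) (_ : 0 < a) (_ : 0 < b) :
    (a - b) * (Real.log a - Real.log b) = (b - a) * (Real.log b - Real.log a) := by ring

lemma Dlog_nn (a b : ℝ) (ha : 0 < a) (hb : 0 < b) :
    0 ≤ (a - b) * (Real.log a - Real.log b) := by
  rcases le_total a b with h | h
  · have hlog : Real.log a ≤ Real.log b := Real.log_le_log ha h
    have := mul_nonneg (by linarith : (0:ℝ) ≤ b - a)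
      (by linarith : (0:ℝ) ≤ Real.log b - Real.log a)
    nlinarith
  · have hlog : Real.log b ≤ Real.log a := Real.log_le_log hb h
    have := mul_nonneg (by linarith : (0:ℝ) ≤ a - b)
      (by linarith : (0:ℝ) ≤ Real.log a - Real.log b)
    nlinarith

lemma Dlog_mono (A B C : ℝ) (hC : 0 < C) (hCB : C ≤ B) (hBA : B ≤ A) :
    (A - B) * (Real.log A - Real.log B) ≤ (A - C) * (Real.log A - Real.log C) := by
  have hB : 0 < B := lt_of_lt_of_le hC hCB
  have h1 : Real.log C ≤ Real.log B := Real.log_le_log hC hCB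
  have h2 : Real.log B ≤ Real.log A := Real.log_le_log hB hBA
  apply mul_le_mul (by linarith) (by linarith) (by linarith) (by linarith)

lemma Dlog_scale (s a b : ℝ) (hs : 0 < s) (ha : 0 < a) (hb : 0 < b) :
    (s * a - s * b) * (Real.log (s * a) - Real.log (s * b))
      = s * ((a - b) * (Real.log a - Real.log b)) := by
  rw [Real.log_mul hs.ne' ha.ne', Real.log_mul hs.ne' hb.ne']
  ring

end DInstances

theorem dirichlet_comparison_kappa
    (π : X → ℝ) (Q : X → X → ℝ)
    (hQ : ∀ x y : X, x ≠ y → 0 ≤ Q x y)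
    (hQsum : ∀ x : X, ∑ y : X, Q x y = 0)
    (hirr : MarkovIrreducible Q)
    (hπpos : ∀ x : X, 0 < π x)
    (hπsum : ∑ x : X, π x = 1)
    (hrev : ∀ x y : X, π x * Q x y = π y * Q y x)
    (r : ℝ) (hr : 1 ≤ r) (f : X → ℝ) (hf : ∀ x, 0 < f x) :
     dirichletForm π Q (fun x => Real.sqrt (fStar Q r f x)) (fun x => Real.sqrt (fStar Q r f x)) ≤
      kappa π Q r * dirichletForm π Q (fun x => Real.sqrt (f x)) (fun x => Real.sqrt (f x)) ∧
    dirichletForm π Q (fStar Q r f) (fun x => Real.log (fStar Q r f x)) ≤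
      kappa π Q r * dirichletForm π Q f (fun x => Real.log (f x)) := by
  constructor
  · have hD := master_sum_le (π := π) hirr hπpos hrev hr hf
      (fun a b => (Real.sqrt a - Real.sqrt b) * (Real.sqrt a - Real.sqrt b))
      Dsqrt_sym (fun a => by simp) (fun a b _ _ => mul_self_nonneg _) Dsqrt_mono Dsqrt_scale
    rw [dirichletForm_eq_sum_edges hQ, dirichletForm_eq_sum_edges hQ]
    calc (1 / 2 : ℝ) * ∑ e ∈ edges Q, edgeWeight π Q e *
          ((Real.sqrt (fStar Q r f e.1) - Real.sqrt (fStar Q r f e.2)) *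
           (Real.sqrt (fStar Q r f e.1) - Real.sqrt (fStar Q r f e.2)))
        ≤ (1 / 2 : ℝ) * (kappa π Q r * ∑ e ∈ edges Q, edgeWeight π Q e *
          ((Real.sqrt (f e.1) - Real.sqrt (f e.2)) * (Real.sqrt (f e.1) - Real.sqrt (f e.2)))) := by
          apply mul_le_mul_of_nonneg_left _ (by norm_num : (0:ℝ) ≤ 1/2)
          exact hD
      _ = kappa π Q r * ((1 / 2 : ℝ) * ∑ e ∈ edges Q, edgeWeight π Q e *
          ((Real.sqrt (f e.1) - Real.sqrt (f e.2)) * (Real.sqrt (f e.1) - Real.sqrt (f e.2)))) := by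
          ring
  · have hD := master_sum_le (π := π) hirr hπpos hrev hr hf
      (fun a b => (a - b) * (Real.log a - Real.log b))
      Dlog_sym (fun a => by simp) Dlog_nn Dlog_mono Dlog_scale
    rw [dirichletForm_eq_sum_edges hQ, dirichletForm_eq_sum_edges hQ]
    calc (1 / 2 : ℝ) * ∑ e ∈ edges Q, edgeWeight π Q e *
          ((fStar Q r f e.1 - fStar Q r f e.2) *
           (Real.log (fStar Q r f e.1) - Real.log (fStar Q r f e.2)))
        ≤ (1 / 2 : ℝ) * (kappa π Q r * ∑ e ∈ edges Q, edgeWeight π Q e *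
          ((f e.1 - f e.2) * (Real.log (f e.1) - Real.log (f e.2)))) := by
          apply mul_le_mul_of_nonneg_left _ (by norm_num : (0:ℝ) ≤ 1/2)
          exact hD
      _ = kappa π Q r * ((1 / 2 : ℝ) * ∑ e ∈ edges Q, edgeWeight π Q e *
          ((f e.1 - f e.2) * (Real.log (f e.1) - Real.log (f e.2)))) := by
          ring

end
end

section
/- (Comparison of Dirichlet forms) Let r := 4/p², f : X → (0,∞), and f_⋆(x) := max_{z∈X} r^{−d(x,z)}·f(z). Then E(√f_⋆, √f_⋆) ≤ (4/3)·E(√f, √f) and E(f_⋆, log f_⋆) ≤ (4/3)·E(f, log f). -/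
open Finset

noncomputable section

variable {X : Type*} [Fintype X] [DecidableEq X] [Nonempty X]

lemma walk_last_suffix {V : Type*} {G : SimpleGraph V} {x z : V} (w : G.Walk x z)
    (h : 1 ≤ w.length) :
    [w.getVert (w.length - 1), w.getVert w.length] <:+ w.support := by
  induction w with
  | nil => simp at h
  | @cons a b c hadj w ih =>
    cases w with
    | nil => simp
    | @cons b' c' d' hadj' w2 =>
      have h2 : 1 ≤ (SimpleGraph.Walk.cons hadj' w2).length := by simp
      have := ih h2
      refine List.IsSuffix.trans ?_ (List.suffix_cons a _)
      · simpa [SimpleGraph.Walk.getVert_cons_succ, SimpleGraph.Walk.length_cons] using this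

lemma dist_getVert {V : Type*} {G : SimpleGraph V} (hconn : G.Connected) {x z : V}
    (w : G.Walk x z) : ∀ i : ℕ, G.dist x (w.getVert i) ≤ i := by
  intro i
  induction i with
  | zero => simp
  | succ i ih =>
    by_cases hi : i < w.length
    · have hadj := w.adj_getVert_succ hi
      calc G.dist x (w.getVert (i+1)) ≤ G.dist x (w.getVert i) + G.dist (w.getVert i) (w.getVert (i+1)) :=
            hconn.dist_triangle
        _ ≤ i + 1 := by
            have h1 : G.dist (w.getVert i) (w.getVert (i+1)) ≤ 1 := by
              have := SimpleGraph.dist_le (SimpleGraph.Walk.cons hadj SimpleGraph.Walk.nil)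
              simpa using this
            omega
    · have h1 : w.getVert (i+1) = z := w.getVert_of_length_le (by omega)
      have h2 : w.getVert i = z := w.getVert_of_length_le (by omega)
      rw [h1, ← h2]; omega



lemma cons_headI_tail {α : Type*} [Inhabited α] {l : List α} (h : l ≠ []) :
    l.headI :: l.tail = l := by
  cases l with
  | nil => exact absurd rfl h
  | cons a t => rfl

lemma listPathSum {X : Type*} [Fintype X] [DecidableEq X] [Inhabited X] [Inhabited X]
    (π : X → ℝ) (Q : X → X → ℝ) (p : ℝ)
    (hQ : ∀ x y : X, x ≠ y → 0 ≤ Q x y)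
    (hπpos : ∀ x, 0 < π x)
    (hrev : ∀ x y, π x * Q x y = π y * Q y x)
    (hQdiag : ∀ x, Q x x ≤ 0)
    (hp : 0 < p)
    (hsp : ∀ x y : X, x ≠ y → 0 < Q x y → p * jumpRate Q x ≤ Q x y) :
    ∀ (n : ℕ) (a b : X), a ≠ b → 0 < Q a b → ∀ s : Finset (List X),
      (∀ l ∈ s, l.length = n + 2 ∧ List.IsChain (fun u v => 0 < Q u v) l ∧ [a, b] <:+ l) →
      ∑ l ∈ s, π l.headI * Q l.headI l.tail.headI ≤ (1/p)^n * (π a * Q a b) := by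
  intro n
  induction n with
  | zero =>
    intro a b hab hQab s hs
    have hsub : s ⊆ {[a, b]} := by
      intro l hl
      obtain ⟨h1, _, h3⟩ := hs l hl
      have : l = [a, b] := (h3.eq_of_length (by simp [h1])).symm
      simp [this]
    rcases Finset.subset_singleton_iff.mp hsub with h | h
    · rw [h, Finset.sum_empty]
      have : (0:ℝ) ≤ π a * Q a b := mul_nonneg (hπpos a).le hQab.le
      simpa using this
    · rw [h]; simp
  | succ n ih =>
    intro a b hab hQab s hs
    -- group by tail
    have hmaps : ∀ l ∈ s, l.tail ∈ s.image List.tail := fun l hl => Finset.mem_image_of_mem _ hl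
    rw [← Finset.sum_fiberwise_of_maps_to hmaps]
    have hstep : ∀ t ∈ s.image List.tail,
        ∑ l ∈ s.filter (fun l => l.tail = t), π l.headI * Q l.headI l.tail.headI
          ≤ (1/p) * (π t.headI * Q t.headI t.tail.headI) := by
      intro t ht
      obtain ⟨l₀, hl₀s, hl₀t⟩ := Finset.mem_image.mp ht
      obtain ⟨hlen₀, hch₀, hsuf₀⟩ := hs l₀ hl₀s
      -- t has the form b₁ :: b₂ :: rest
      match t, hl₀t with
      | t, hl₀t =>
      cases l₀ with
      | nil => simp at hlen₀
      | cons h₀ t₀ =>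
        have htt : t = t₀ := by simpa using hl₀t.symm
        subst htt
        cases t with
        | nil => simp at hlen₀
        | cons b₁ t' =>
          cases t' with
          | nil => simp at hlen₀
          | cons b₂ rest =>
            -- facts about t = b₁ :: b₂ :: rest
            have hchT : List.IsChain (fun u v => 0 < Q u v) (b₁ :: b₂ :: rest) := hch₀.tail
            have hQ12 : 0 < Q b₁ b₂ := (List.isChain_cons_cons.mp hchT).1
            have h12 : b₁ ≠ b₂ := by
              intro h; rw [h] at hQ12; exact absurd hQ12 (not_lt.mpr (hQdiag b₂))
            -- bound the fiber sum
            have hinj : ∀ l₁ ∈ s.filter (fun l => l.tail = b₁ :: b₂ :: rest),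
                ∀ l₂ ∈ s.filter (fun l => l.tail = b₁ :: b₂ :: rest),
                  l₁.headI = l₂.headI → l₁ = l₂ := by
              intro l₁ hl₁ l₂ hl₂ hh
              have h₁ := (Finset.mem_filter.mp hl₁).2
              have h₂ := (Finset.mem_filter.mp hl₂).2
              have hne₁ : l₁ ≠ [] := by
                intro h; rw [h] at h₁; simp at h₁
              have hne₂ : l₂ ≠ [] := by
                intro h; rw [h] at h₂; simp at h₂
              rw [← cons_headI_tail hne₁, ← cons_headI_tail hne₂, hh, h₁, h₂]
            have key : ∑ l ∈ s.filter (fun l => l.tail = b₁ :: b₂ :: rest),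
                π l.headI * Q l.headI l.tail.headI
                = ∑ v ∈ (s.filter (fun l => l.tail = b₁ :: b₂ :: rest)).image List.headI,
                    π v * Q v b₁ := by
              rw [Finset.sum_image hinj]
              apply Finset.sum_congr rfl
              intro l hl
              have h := (Finset.mem_filter.mp hl).2
              rw [h]
              rfl
            rw [key]
            have himg : ∀ v ∈ (s.filter (fun l => l.tail = b₁ :: b₂ :: rest)).image List.headI,
                0 < Q v b₁ := by
              intro v hv
              obtain ⟨l, hl, hlv⟩ := Finset.mem_image.mp hv
              obtain ⟨hls, hlt⟩ := Finset.mem_filter.mp hl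
              obtain ⟨_, hch, _⟩ := hs l hls
              have hne : l ≠ [] := by intro h; rw [h] at hlt; simp at hlt
              have : l = v :: b₁ :: b₂ :: rest := by
                rw [← cons_headI_tail hne, hlv, hlt]
              rw [this] at hch
              exact (List.isChain_cons_cons.mp hch).1
            have hsub2 : (s.filter (fun l => l.tail = b₁ :: b₂ :: rest)).image List.headI
                ⊆ univ.erase b₁ := by
              intro v hv
              have hQv := himg v hv
              have : v ≠ b₁ := by
                intro h; rw [h] at hQv; exact absurd hQv (not_lt.mpr (hQdiag b₁))
              exact Finset.mem_erase.mpr ⟨this, Finset.mem_univ v⟩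
            calc ∑ v ∈ (s.filter (fun l => l.tail = b₁ :: b₂ :: rest)).image List.headI, π v * Q v b₁
                = ∑ v ∈ (s.filter (fun l => l.tail = b₁ :: b₂ :: rest)).image List.headI,
                    π b₁ * Q b₁ v := by
                  apply Finset.sum_congr rfl; intro v _; exact hrev v b₁
              _ ≤ ∑ v ∈ univ.erase b₁, π b₁ * Q b₁ v := by
                  apply Finset.sum_le_sum_of_subset_of_nonneg hsub2
                  intro v hv _
                  have hvb : v ≠ b₁ := (Finset.mem_erase.mp hv).1
                  exact mul_nonneg (hπpos b₁).le (hQ b₁ v hvb.symm)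
              _ = π b₁ * jumpRate Q b₁ := by rw [jumpRate, Finset.mul_sum]
              _ ≤ (1/p) * (π b₁ * Q b₁ b₂) := by
                  have := hsp b₁ b₂ h12 hQ12
                  have hj : jumpRate Q b₁ ≤ Q b₁ b₂ / p := by
                    rw [le_div_iff₀ hp]; linarith
                  have hπ := (hπpos b₁).le
                  calc π b₁ * jumpRate Q b₁ ≤ π b₁ * (Q b₁ b₂ / p) :=
                        mul_le_mul_of_nonneg_left hj hπ
                    _ = (1/p) * (π b₁ * Q b₁ b₂) := by ring
              _ = (1/p) * (π (b₁ :: b₂ :: rest).headI * Q (b₁ :: b₂ :: rest).headI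
                    (b₁ :: b₂ :: rest).tail.headI) := by simp
    calc ∑ t ∈ s.image List.tail, ∑ l ∈ s.filter (fun l => l.tail = t),
          π l.headI * Q l.headI l.tail.headI
        ≤ ∑ t ∈ s.image List.tail, (1/p) * (π t.headI * Q t.headI t.tail.headI) :=
          Finset.sum_le_sum hstep
      _ = (1/p) * ∑ t ∈ s.image List.tail, π t.headI * Q t.headI t.tail.headI := by
          rw [Finset.mul_sum]
      _ ≤ (1/p) * ((1/p)^n * (π a * Q a b)) := by
          apply mul_le_mul_of_nonneg_left _ (by positivity)
          apply ih a b hab hQab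
          intro t ht
          obtain ⟨l, hls, hlt⟩ := Finset.mem_image.mp ht
          obtain ⟨hlen, hch, hsuf⟩ := hs l hls
          have hne : l ≠ [] := by intro h; rw [h] at hlen; simp at hlen
          refine ⟨?_, by rw [← hlt]; exact hch.tail, ?_⟩
          · rw [← hlt, List.length_tail, hlen]; omega
          · rw [← cons_headI_tail hne] at hsuf
            rcases List.suffix_cons_iff.mp hsuf with h | h
            · exfalso
              have := congrArg List.length h
              simp [List.length_tail, hlen] at this
            · rw [← hlt]; exact h
      _ = (1/p)^(n+1) * (π a * Q a b) := by ring

lemma geomQuarter : ∀ N : ℕ, (∑ k ∈ Finset.Icc 1 N, ((1:ℝ)/4)^k) ≤ 1/3 := by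
  have key : ∀ N : ℕ, (∑ k ∈ Finset.Icc 1 N, ((1:ℝ)/4)^k) = (1 - (1/4)^N)/3 := by
    intro N
    induction N with
    | zero => simp
    | succ n ih =>
      rw [Finset.sum_Icc_succ_top (by omega), ih, pow_succ]
      ring
  intro N
  rw [key N]
  have : (0:ℝ) ≤ (1/4)^N := by positivity
  linarith

lemma master_comparison
    (π : X → ℝ) (Q : X → X → ℝ)
    (hQ : ∀ x y : X, x ≠ y → 0 ≤ Q x y)
    (hQsum : ∀ x : X, ∑ y : X, Q x y = 0)
    (hirr : MarkovIrreducible Q)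
    (hπpos : ∀ x : X, 0 < π x)
    (hrev : ∀ x y : X, π x * Q x y = π y * Q y x)
    (f : X → ℝ) (hf : ∀ x, 0 < f x)
    (Φ : ℝ → ℝ → ℝ)
    (hsymm : ∀ a b, Φ a b = Φ b a)
    (hdiag : ∀ a, Φ a a = 0)
    (hnn : ∀ a b, 0 < a → 0 < b → 0 ≤ Φ a b)
    (hanti : ∀ a b b' : ℝ, 0 < b → b ≤ b' → b' ≤ a → Φ a b' ≤ Φ a b)
    (hscale : ∀ l a b : ℝ, 0 < l → 0 < a → 0 < b → Φ (l*a) (l*b) = l * Φ a b) :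
    (1/2) * ∑ x : X, ∑ y : X, π x * Q x y *
        Φ (fStar Q (4 / sparsity Q ^ 2) f x) (fStar Q (4 / sparsity Q ^ 2) f y)
      ≤ (4/3) * ((1/2) * ∑ x : X, ∑ y : X, π x * Q x y * Φ (f x) (f y)) := by
  classical
  haveI : Inhabited X := Classical.inhabited_of_nonempty ‹_›
  -- basic generator facts
  have hjump_nonneg : ∀ x : X, 0 ≤ jumpRate Q x := by
    intro x
    exact Finset.sum_nonneg fun y hy => hQ x y (Finset.mem_erase.mp hy).1.symm
  have hQdiag : ∀ x : X, Q x x ≤ 0 := by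
    intro x
    have h1 : Q x x + ∑ y ∈ univ.erase x, Q x y = ∑ y : X, Q x y :=
      Finset.add_sum_erase univ (Q x) (mem_univ x)
    have h2 := hQsum x
    have := hjump_nonneg x
    rw [jumpRate] at this
    linarith
  have hQsymmpos : ∀ x y : X, 0 < Q x y → 0 < Q y x := by
    intro x y h
    have h2 : 0 < π y * Q y x := by rw [← hrev]; exact mul_pos (hπpos x) h
    by_contra hc
    push_neg at hc
    nlinarith [hπpos y]
  have hQnediag : ∀ x y : X, 0 < Q x y → x ≠ y := by
    intro x y h he
    rw [he] at h
    exact absurd h (not_lt.mpr (hQdiag y))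
  by_cases hEx : ∃ x y : X, x ≠ y ∧ 0 < Q x y
  case neg =>
    -- degenerate case: no edges, both sums vanish
    push_neg at hEx
    have hQ0 : ∀ x y : X, x ≠ y → Q x y = 0 := by
      intro x y h
      exact le_antisymm (hEx x y h) (hQ x y h)
    have hz : ∀ (u : X → ℝ), ∑ x : X, ∑ y : X, π x * Q x y * Φ (u x) (u y) = 0 := by
      intro u
      apply Finset.sum_eq_zero
      intro x _
      apply Finset.sum_eq_zero
      intro y _
      by_cases hxy : x = y
      · rw [hxy, hdiag, mul_zero]
      · rw [hQ0 x y hxy, mul_zero, zero_mul]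
    rw [hz, hz]
    norm_num
  obtain ⟨x₀, y₀, hne₀, hQ₀⟩ := hEx
  -- sparsity facts
  set p := sparsity Q with hp_def
  have hQle_jump : ∀ x y : X, x ≠ y → Q x y ≤ jumpRate Q x := by
    intro x y hxy
    exact Finset.single_le_sum (fun z hz => hQ x z (Finset.mem_erase.mp hz).1.symm)
      (Finset.mem_erase.mpr ⟨hxy.symm, mem_univ y⟩)
  have hSfin : {s : ℝ | ∃ x y : X, x ≠ y ∧ 0 < Q x y ∧
      s = Q x y / max (jumpRate Q x) (Q y x)}.Finite := by
    apply Set.Finite.subset (Set.finite_range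
      (fun e : X × X => Q e.1 e.2 / max (jumpRate Q e.1) (Q e.2 e.1)))
    rintro s ⟨x, y, -, -, rfl⟩
    exact ⟨(x, y), rfl⟩
  have hSne : {s : ℝ | ∃ x y : X, x ≠ y ∧ 0 < Q x y ∧
      s = Q x y / max (jumpRate Q x) (Q y x)}.Nonempty :=
    ⟨_, x₀, y₀, hne₀, hQ₀, rfl⟩
  have hpmem : p ∈ {s : ℝ | ∃ x y : X, x ≠ y ∧ 0 < Q x y ∧
      s = Q x y / max (jumpRate Q x) (Q y x)} := hSne.csInf_mem hSfin
  obtain ⟨xp, yp, hnep, hQp, hpe⟩ := hpmem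
  have hmaxp : 0 < max (jumpRate Q xp) (Q yp xp) :=
    lt_of_lt_of_le hQp (le_trans (hQle_jump xp yp hnep) (le_max_left _ _))
  have hp0 : 0 < p := by rw [hpe]; exact div_pos hQp hmaxp
  have hp1 : p ≤ 1 := by
    rw [hpe]
    exact div_le_one_of_le₀ (le_trans (hQle_jump xp yp hnep) (le_max_left _ _)) hmaxp.le
  have hsp : ∀ x y : X, x ≠ y → 0 < Q x y → p * jumpRate Q x ≤ Q x y := by
    intro x y hxy hQxy
    have hmax : 0 < max (jumpRate Q x) (Q y x) :=
      lt_of_lt_of_le hQxy (le_trans (hQle_jump x y hxy) (le_max_left _ _))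
    have hle : p ≤ Q x y / max (jumpRate Q x) (Q y x) :=
      csInf_le hSfin.bddBelow ⟨x, y, hxy, hQxy, rfl⟩
    have h1 : p * max (jumpRate Q x) (Q y x) ≤ Q x y := by
      rw [← le_div_iff₀ hmax]; exact hle
    calc p * jumpRate Q x ≤ p * max (jumpRate Q x) (Q y x) :=
          mul_le_mul_of_nonneg_left (le_max_left _ _) hp0.le
      _ ≤ Q x y := h1
  set r := 4 / p ^ 2 with hr_def
  have hr4 : (4:ℝ) ≤ r := by
    rw [hr_def, le_div_iff₀ (by positivity)]
    nlinarith
  have hr1 : (1:ℝ) < r := by linarith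
  have hr0 : (0:ℝ) < r := by linarith
  -- graph facts
  have hconn : (chainGraph Q).Connected := by
    rw [SimpleGraph.connected_iff]
    refine ⟨fun u v => ?_, ‹Nonempty X›⟩
    rw [SimpleGraph.reachable_iff_reflTransGen]
    exact Relation.ReflTransGen.mono (p := (chainGraph Q).Adj) (fun a b hab => ⟨hab.1, Or.inl hab.2⟩) u v (hirr u v)
  have hadj : ∀ x y : X, 0 < Q x y → (chainGraph Q).Adj x y :=
    fun x y h => ⟨hQnediag x y h, Or.inl h⟩
  have hadjQ : ∀ x y : X, (chainGraph Q).Adj x y → 0 < Q x y :=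
    fun x y h => h.2.elim id (hQsymmpos y x)
  -- fStar facts
  set g := fStar Q r f with hg_def
  have hzpow : ∀ (k : ℕ), r ^ (-(k:ℤ)) = ((r:ℝ)^k)⁻¹ := by
    intro k; rw [zpow_neg, zpow_natCast]
  have hg_ge : ∀ x z : X, (r ^ (graphDist Q x z))⁻¹ * f z ≤ g x := by
    intro x z
    rw [hg_def, fStar, ← hzpow]
    exact Finset.le_sup' (fun z => r ^ (-(graphDist Q x z : ℤ)) * f z) (mem_univ z)
  have hg_ex : ∀ x : X, ∃ z : X, g x = (r ^ (graphDist Q x z))⁻¹ * f z := by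
    intro x
    obtain ⟨z, -, hz⟩ := Finset.exists_mem_eq_sup' univ_nonempty
      (fun z => r ^ (-(graphDist Q x z : ℤ)) * f z)
    refine ⟨z, ?_⟩
    rw [hg_def, fStar, hz, hzpow]
  have hgf : ∀ x : X, f x ≤ g x := by
    intro x
    have := hg_ge x x
    have hd : graphDist Q x x = 0 := SimpleGraph.dist_self
    rw [hd] at this
    simpa using this
  have hgpos : ∀ x : X, 0 < g x := fun x => lt_of_lt_of_le (hf x) (hgf x)
  have hmono : ∀ d k : ℕ, d ≤ k → ((r:ℝ)^k)⁻¹ ≤ (r^d)⁻¹ := by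
    intro d k hdk
    apply inv_anti₀ (by positivity)
    exact pow_le_pow_right₀ (by linarith) hdk
  set N := Fintype.card X with hN_def
  have hdistN : ∀ x z : X, graphDist Q x z ≤ N := by
    intro x z
    obtain ⟨w⟩ := hconn.preconnected x z
    exact le_of_lt (lt_of_le_of_lt (SimpleGraph.dist_le w.bypass) w.bypass_isPath.length_lt)
  -- the edge sets
  set A : Finset (X × X) := univ.filter (fun e => 0 < Q e.1 e.2 ∧ g e.2 < g e.1) with hA_def
  set EE : Finset (X × X) := univ.filter (fun e => e.1 ≠ e.2 ∧ 0 < Q e.1 e.2) with hEE_def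
  set c : X × X → ℝ := fun e => π e.1 * Q e.1 e.2 with hc_def
  have hcsym : ∀ e : X × X, c (e.2, e.1) = c e := fun e => (hrev e.1 e.2).symm
  -- the choice of geodesics
  have hspec : ∀ e' : X × X, ∃ (k : ℕ) (T : X × X) (l : List X),
      (0 < Q e'.1 e'.2 ∧ g e'.2 < g e'.1) →
      (Φ (g e'.1) (g e'.2) ≤ (r ^ k)⁻¹ * Φ (f T.2) (f T.1)
       ∧ T.1 ≠ T.2 ∧ 0 < Q T.1 T.2 ∧ k ≤ N ∧ (k = 0 → T = e')
       ∧ (k ≠ 0 → l.length = k + 2 ∧ List.IsChain (fun u v => 0 < Q u v) l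
            ∧ [T.1, T.2] <:+ l ∧ l.headI = e'.2 ∧ l.tail.headI = e'.1
            ∧ f T.1 * r ≤ f T.2)) := by
    intro e'
    by_cases he' : 0 < Q e'.1 e'.2 ∧ g e'.2 < g e'.1
    case neg => exact ⟨0, e', [], fun h => absurd h he'⟩
    obtain ⟨hQ', hg'⟩ := he'
    have hxyne : e'.1 ≠ e'.2 := hQnediag _ _ hQ'
    obtain ⟨z, hz⟩ := hg_ex e'.1
    by_cases hk : graphDist Q e'.1 z = 0
    · -- distance zero: the max is attained at e'.1 itself
      have hz1 : e'.1 = z := (hconn.dist_eq_zero_iff).mp hk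
      have hgx : g e'.1 = f e'.1 := by
        rw [hz, hk, ← hz1]
        simp
      refine ⟨0, e', [], fun _ => ⟨?_, hxyne, hQ', Nat.zero_le _, fun _ => rfl,
        fun h0 => absurd rfl h0⟩⟩
      rw [pow_zero, inv_one, one_mul, hsymm (f e'.2) (f e'.1), hgx]
      exact hanti (f e'.1) (f e'.2) (g e'.2) (hf e'.2) (hgf e'.2) (hgx ▸ hg'.le)
    · -- distance at least one
      set k := graphDist Q e'.1 z with hk_def
      have hk1 : 1 ≤ k := Nat.one_le_iff_ne_zero.mpr hk
      obtain ⟨w, hw⟩ := (hconn.preconnected e'.1 z).exists_walk_length_eq_dist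
      have hwlen : w.length = k := hw
      set u := w.getVert (k - 1) with hu_def
      have hzV : w.getVert k = z := by rw [← hwlen]; exact w.getVert_length
      have hadj_uz : (chainGraph Q).Adj u z := by
        have h1 : k - 1 < w.length := by omega
        have := w.adj_getVert_succ h1
        rw [show k - 1 + 1 = k by omega, hzV] at this
        exact this
      have hQuz : 0 < Q u z := hadjQ _ _ hadj_uz
      have hne_uz : u ≠ z := hadj_uz.ne
      have hdxu : graphDist Q e'.1 u ≤ k - 1 := by
        have := dist_getVert hconn w (k - 1)
        exact this
      -- f u * r ≤ f z
      have hrk : (r:ℝ) ^ k = r ^ (k-1) * r := by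
        rw [← pow_succ]
        congr 1
        omega
      have hfu' : (r ^ (k-1))⁻¹ * f u ≤ g e'.1 := by
        calc (r ^ (k-1))⁻¹ * f u ≤ (r ^ (graphDist Q e'.1 u))⁻¹ * f u :=
              mul_le_mul_of_nonneg_right (hmono _ _ hdxu) (hf u).le
          _ ≤ g e'.1 := hg_ge e'.1 u
      have hfu : f u * r ≤ f z := by
        rw [hz, hrk] at hfu'
        have hp1 : (0:ℝ) < r ^ (k-1) := by positivity
        have := mul_le_mul_of_nonneg_left hfu' hp1.le
        rw [← mul_assoc, mul_inv_cancel₀ hp1.ne', one_mul] at this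
        calc f u * r ≤ (r ^ (k-1) * ((r ^ (k-1) * r)⁻¹ * f z)) * r := by
              exact mul_le_mul_of_nonneg_right this hr0.le
          _ = f z := by field_simp
      -- g e'.1 * r⁻¹ ≤ g e'.2
      have hdyz : graphDist Q e'.2 z ≤ k + 1 := by
        have h1 : graphDist Q e'.2 z ≤ graphDist Q e'.2 e'.1 + graphDist Q e'.1 z :=
          hconn.dist_triangle
        have h2 : graphDist Q e'.2 e'.1 ≤ 1 := by
          have hadjyx : (chainGraph Q).Adj e'.2 e'.1 := (hadj _ _ hQ').symm
          have := SimpleGraph.dist_le (SimpleGraph.Walk.cons hadjyx SimpleGraph.Walk.nil)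
          simpa [graphDist] using this
        omega
      have hgy_lb : g e'.1 * r⁻¹ ≤ g e'.2 := by
        have h1 : (r ^ (k+1))⁻¹ * f z ≤ (r ^ (graphDist Q e'.2 z))⁻¹ * f z :=
          mul_le_mul_of_nonneg_right (hmono _ _ hdyz) (hf z).le
        have h2 := le_trans h1 (hg_ge e'.2 z)
        rw [hz]
        calc (r ^ k)⁻¹ * f z * r⁻¹ = (r ^ (k+1))⁻¹ * f z := by
              rw [pow_succ]
              field_simp
          _ ≤ g e'.2 := h2
      -- the pointwise bound
      have hbound : Φ (g e'.1) (g e'.2) ≤ (r ^ k)⁻¹ * Φ (f z) (f u) := by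
        have hb1 : Φ (g e'.1) (g e'.2) ≤ Φ (g e'.1) (g e'.1 * r⁻¹) := by
          apply hanti (g e'.1) (g e'.1 * r⁻¹) (g e'.2)
          · exact mul_pos (hgpos e'.1) (by positivity)
          · exact hgy_lb
          · exact hg'.le
        have hb2 : Φ (g e'.1) (g e'.1 * r⁻¹) = (r ^ k)⁻¹ * Φ (f z) (f z * r⁻¹) := by
          have e1 : g e'.1 = (r ^ k)⁻¹ * f z := hz
          have e2 : g e'.1 * r⁻¹ = (r ^ k)⁻¹ * (f z * r⁻¹) := by rw [e1]; ring
          rw [e2, e1]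
          exact hscale _ _ _ (by positivity) (hf z) (mul_pos (hf z) (by positivity))
        have hb3 : Φ (f z) (f z * r⁻¹) ≤ Φ (f z) (f u) := by
          apply hanti (f z) (f u) (f z * r⁻¹) (hf u)
          · rw [← le_div_iff₀ hr0] at hfu
            rw [div_eq_mul_inv] at hfu
            exact hfu
          · calc f z * r⁻¹ ≤ f z * 1 := by
                  apply mul_le_mul_of_nonneg_left _ (hf z).le
                  rw [inv_le_one_iff₀]
                  right; linarith
              _ = f z := mul_one _
        calc Φ (g e'.1) (g e'.2) ≤ Φ (g e'.1) (g e'.1 * r⁻¹) := hb1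
          _ = (r ^ k)⁻¹ * Φ (f z) (f z * r⁻¹) := hb2
          _ ≤ (r ^ k)⁻¹ * Φ (f z) (f u) :=
              mul_le_mul_of_nonneg_left hb3 (by positivity)
      -- the witness list
      refine ⟨k, (u, z), e'.2 :: w.support, fun _ => ⟨hbound, hne_uz, hQuz,
        hdistN e'.1 z, fun h0 => absurd h0 hk, fun _ => ⟨?_, ?_, ?_, rfl, ?_, hfu⟩⟩⟩
      · simp [SimpleGraph.Walk.length_support, hwlen]
      · rw [w.support_eq_cons, List.isChain_cons_cons]
        constructor
        · exact hQsymmpos _ _ hQ'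
        · rw [← w.support_eq_cons]
          exact (w.isChain_adj_support).imp (fun a b hab => hadjQ a b hab)
      · have hsuf : [u, z] <:+ w.support := by
          have := walk_last_suffix w (by omega)
          rw [hwlen, hzV] at this
          exact this
        exact hsuf.trans (List.suffix_cons e'.2 _)
      · rw [show (e'.2 :: w.support).tail = w.support from rfl, w.support_eq_cons]
        rfl

  choose kk TT ll hhspec using hspec
  -- rewrite LHS
  have hLHS : ∑ x : X, ∑ y : X, π x * Q x y * Φ (g x) (g y)
      = 2 * ∑ e ∈ A, c e * Φ (g e.1) (g e.2) := by
    rw [← Finset.sum_product', Finset.univ_product_univ]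
    have hdisj : Disjoint A (A.image Prod.swap) := by
      rw [Finset.disjoint_left]
      intro e heA heI
      obtain ⟨-, -, hgA⟩ := Finset.mem_filter.mp heA
      obtain ⟨a, ha, hae⟩ := Finset.mem_image.mp heI
      obtain ⟨-, -, hga⟩ := Finset.mem_filter.mp ha
      rw [← hae] at hgA
      simp only [Prod.fst_swap, Prod.snd_swap] at hgA
      linarith
    have hzero : ∀ e ∈ (univ : Finset (X × X)), e ∉ A ∪ A.image Prod.swap →
        π e.1 * Q e.1 e.2 * Φ (g e.1) (g e.2) = 0 := by
      intro e _ he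
      rw [Finset.mem_union, not_or] at he
      obtain ⟨h1, h2⟩ := he
      by_cases hgeq : g e.1 = g e.2
      · rw [hgeq, hdiag, mul_zero]
      have hne : e.1 ≠ e.2 := fun h => hgeq (by rw [h])
      rcases lt_or_gt_of_ne hgeq with hlt | hgt
      · have hnq : ¬ (0 < Q e.2 e.1) := by
          intro hq
          apply h2
          rw [Finset.mem_image]
          exact ⟨(e.2, e.1), Finset.mem_filter.mpr ⟨mem_univ _, hq, hlt⟩, by simp⟩
        have hq0 : Q e.1 e.2 = 0 := by
          by_contra hq2
          exact hnq (hQsymmpos _ _ (lt_of_le_of_ne (hQ _ _ hne) (Ne.symm hq2)))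
        rw [hq0, mul_zero, zero_mul]
      · have hnq : ¬ (0 < Q e.1 e.2) := fun hq =>
          h1 (Finset.mem_filter.mpr ⟨mem_univ _, hq, hgt⟩)
        have hq0 : Q e.1 e.2 = 0 := le_antisymm (not_lt.mp hnq) (hQ _ _ hne)
        rw [hq0, mul_zero, zero_mul]
    rw [← Finset.sum_subset (Finset.subset_univ (A ∪ A.image Prod.swap)) hzero]
    rw [Finset.sum_union hdisj]
    have himg : ∑ e ∈ A.image Prod.swap, π e.1 * Q e.1 e.2 * Φ (g e.1) (g e.2)
        = ∑ e ∈ A, π e.1 * Q e.1 e.2 * Φ (g e.1) (g e.2) := by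
      rw [Finset.sum_image (fun a _ b _ h => Prod.swap_injective h)]
      apply Finset.sum_congr rfl
      intro a _
      simp only [Prod.fst_swap, Prod.snd_swap]
      rw [hrev a.2 a.1, hsymm (g a.2) (g a.1)]
    rw [himg]
    ring

  -- rewrite RHS
  have hRHS : ∑ x : X, ∑ y : X, π x * Q x y * Φ (f x) (f y)
      = ∑ e ∈ EE, c e * Φ (f e.1) (f e.2) := by
    rw [← Finset.sum_product', Finset.univ_product_univ]
    have hzero : ∀ e ∈ (univ : Finset (X × X)), e ∉ EE →
        π e.1 * Q e.1 e.2 * Φ (f e.1) (f e.2) = 0 := by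
      intro e _ he
      rw [hEE_def, Finset.mem_filter, not_and] at he
      have hne := he (mem_univ e)
      rw [not_and] at hne
      by_cases hxy : e.1 = e.2
      · rw [hxy, hdiag, mul_zero]
      · have hq0 : Q e.1 e.2 = 0 := le_antisymm (not_lt.mp (hne hxy)) (hQ _ _ hxy)
        rw [hq0, mul_zero, zero_mul]
    rw [← Finset.sum_subset (Finset.subset_univ EE) hzero]

  -- the fiberwise masses
  set M : X × X → ℝ := fun e => ∑ e' ∈ A.filter (fun e' => TT e' = e), c e' * (r ^ kk e')⁻¹
    with hM_def
  have hMbound : ∀ e ∈ EE, M e + M (e.2, e.1) ≤ (4/3) * c e := by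
    -- singleton structure of the k = 0 part
    have hAmem : ∀ e' : X × X, e' ∈ A → (0 < Q e'.1 e'.2 ∧ g e'.2 < g e'.1) := by
      intro e' he'
      exact (Finset.mem_filter.mp he').2
    have hS0sub : ∀ e₀ : X × X, (A.filter (fun e' => TT e' = e₀)).filter (fun e' => kk e' = 0)
        ⊆ {e₀} := by
      intro e₀ e' he'
      obtain ⟨he1, hk0⟩ := Finset.mem_filter.mp he'
      obtain ⟨heA, hTe⟩ := Finset.mem_filter.mp he1
      have h0 := ((hhspec e' (hAmem e' heA)).2.2.2.2.1) hk0
      rw [Finset.mem_singleton, ← hTe, h0]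
    have hM1orient : ∀ e₀ : X × X, ∀ e' ∈ (A.filter (fun e' => TT e' = e₀)).filter
        (fun e' => ¬ kk e' = 0), f e₀.1 * r ≤ f e₀.2 := by
      intro e₀ e' he'
      obtain ⟨he1, hk0⟩ := Finset.mem_filter.mp he'
      obtain ⟨heA, hTe⟩ := Finset.mem_filter.mp he1
      have h := ((hhspec e' (hAmem e' heA)).2.2.2.2.2) hk0
      rw [hTe] at h
      exact h.2.2.2.2.2
    have hM1single : ∀ e₀ : X × X, e₀.1 ≠ e₀.2 → 0 < Q e₀.1 e₀.2 →
        ∑ e' ∈ (A.filter (fun e' => TT e' = e₀)).filter (fun e' => ¬ kk e' = 0),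
          c e' * (r ^ kk e')⁻¹ ≤ (1/3) * c e₀ := by
      intro e₀ hne₀ hQe₀
      have hce₀ : 0 ≤ c e₀ := mul_nonneg (hπpos _).le hQe₀.le
      have hkmem : ∀ e' ∈ (A.filter (fun e' => TT e' = e₀)).filter (fun e' => ¬ kk e' = 0),
          kk e' ∈ Finset.Icc 1 N := by
        intro e' he'
        obtain ⟨he1, hk0⟩ := Finset.mem_filter.mp he'
        have hN := (hhspec e' (hAmem e' (Finset.mem_filter.mp he1).1)).2.2.2.1
        exact Finset.mem_Icc.mpr ⟨Nat.one_le_iff_ne_zero.mpr hk0, hN⟩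
      rw [← Finset.sum_fiberwise_of_maps_to hkmem (fun e' => c e' * (r ^ kk e')⁻¹)]
      have hfrac : ∀ k : ℕ, ((1:ℝ)/p)^k * ((r:ℝ)^k)⁻¹ ≤ (1/4)^k := by
        intro k
        have hpr : p * r = 4 / p := by
          rw [hr_def]
          field_simp
        have hpr4 : (4:ℝ) ≤ p * r := by
          rw [hpr, le_div_iff₀ hp0]
          nlinarith
        have hprpos : (0:ℝ) < p * r := by nlinarith
        have h1 : ((1:ℝ)/p)^k * ((r:ℝ)^k)⁻¹ = (1/(p*r))^k := by
          rw [one_div, one_div, inv_pow, inv_pow, mul_pow, mul_inv]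
        rw [h1]
        apply pow_le_pow_left₀ (by positivity)
        rw [div_le_div_iff₀ hprpos (by norm_num)]
        linarith
      have hinner : ∀ k ∈ Finset.Icc 1 N,
          ∑ e' ∈ ((A.filter (fun e' => TT e' = e₀)).filter (fun e' => ¬ kk e' = 0)).filter
              (fun e' => kk e' = k), c e' * (r ^ kk e')⁻¹
            ≤ (1/4)^k * c e₀ := by
        intro k hk
        set S1k := ((A.filter (fun e' => TT e' = e₀)).filter (fun e' => ¬ kk e' = 0)).filter
            (fun e' => kk e' = k) with hS1k
        have hmemS : ∀ e' ∈ S1k, e' ∈ A ∧ TT e' = e₀ ∧ kk e' = k ∧ kk e' ≠ 0 := by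
          intro e' he'
          obtain ⟨he1, hkk⟩ := Finset.mem_filter.mp he'
          obtain ⟨he2, hnk⟩ := Finset.mem_filter.mp he1
          obtain ⟨heA, hTe⟩ := Finset.mem_filter.mp he2
          exact ⟨heA, hTe, hkk, hnk⟩
        have hlistmem : ∀ e' ∈ S1k,
            (ll e').length = k + 2 ∧ List.IsChain (fun u v => 0 < Q u v) (ll e')
              ∧ [e₀.1, e₀.2] <:+ ll e' ∧ (ll e').headI = e'.2 ∧ (ll e').tail.headI = e'.1 := by
          intro e' he'
          obtain ⟨heA, hTe, hkk, hnk⟩ := hmemS e' he'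
          have h := ((hhspec e' (hAmem e' heA)).2.2.2.2.2) hnk
          rw [hTe, hkk] at h
          exact ⟨h.1, h.2.1, h.2.2.1, h.2.2.2.1, h.2.2.2.2.1⟩
        have hrw : ∑ e' ∈ S1k, c e' * (r ^ kk e')⁻¹
            = (∑ e' ∈ S1k, c e') * ((r:ℝ) ^ k)⁻¹ := by
          rw [Finset.sum_mul]
          apply Finset.sum_congr rfl
          intro e' he'
          rw [(hmemS e' he').2.2.1]
        rw [hrw]
        have hinj : ∀ e₁ ∈ S1k, ∀ e₂ ∈ S1k, ll e₁ = ll e₂ → e₁ = e₂ := by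
          intro e₁ he₁ e₂ he₂ hl
          obtain ⟨-, -, -, h11, h12⟩ := hlistmem e₁ he₁
          obtain ⟨-, -, -, h21, h22⟩ := hlistmem e₂ he₂
          have : e₁.2 = e₂.2 := by rw [← h11, ← h21, hl]
          have h2 : e₁.1 = e₂.1 := by rw [← h12, ← h22, hl]
          exact Prod.ext h2 this
        have hsum_eq : ∑ e' ∈ S1k, c e'
            = ∑ l ∈ S1k.image ll, π l.headI * Q l.headI l.tail.headI := by
          rw [Finset.sum_image hinj]
          apply Finset.sum_congr rfl
          intro e' he'
          obtain ⟨-, -, -, hh1, hh2⟩ := hlistmem e' he'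
          rw [hh1, hh2]
          exact hrev e'.1 e'.2
        have hLB := listPathSum π Q p hQ hπpos hrev hQdiag hp0 hsp k e₀.1 e₀.2 hne₀ hQe₀
            (S1k.image ll) (by
              intro l hl
              obtain ⟨e', he', hle⟩ := Finset.mem_image.mp hl
              obtain ⟨h1, h2, h3, -, -⟩ := hlistmem e' he'
              rw [← hle]
              exact ⟨h1, h2, h3⟩)
        have hsumle : ∑ e' ∈ S1k, c e' ≤ (1/p)^k * (π e₀.1 * Q e₀.1 e₀.2) := by
          rw [hsum_eq]
          exact hLB
        calc (∑ e' ∈ S1k, c e') * ((r:ℝ) ^ k)⁻¹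
            ≤ ((1/p)^k * (π e₀.1 * Q e₀.1 e₀.2)) * ((r:ℝ) ^ k)⁻¹ := by
              apply mul_le_mul_of_nonneg_right hsumle
              positivity
          _ = ((1/p)^k * ((r:ℝ)^k)⁻¹) * c e₀ := by ring
          _ ≤ (1/4)^k * c e₀ := mul_le_mul_of_nonneg_right (hfrac k) hce₀
      calc ∑ k ∈ Finset.Icc 1 N, ∑ e' ∈ ((A.filter (fun e' => TT e' = e₀)).filter
              (fun e' => ¬ kk e' = 0)).filter (fun e' => kk e' = k), c e' * (r ^ kk e')⁻¹
          ≤ ∑ k ∈ Finset.Icc 1 N, ((1:ℝ)/4)^k * c e₀ := Finset.sum_le_sum hinner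
        _ = (∑ k ∈ Finset.Icc 1 N, ((1:ℝ)/4)^k) * c e₀ := by rw [Finset.sum_mul]
        _ ≤ (1/3) * c e₀ := mul_le_mul_of_nonneg_right (geomQuarter N) hce₀
    -- now the combination
    intro e he
    obtain ⟨-, hne, hQe⟩ := Finset.mem_filter.mp he
    have hce : 0 < c e := mul_pos (hπpos _) hQe
    have hsplit : ∀ e₀ : X × X, M e₀ =
        (∑ e' ∈ (A.filter (fun e' => TT e' = e₀)).filter (fun e' => kk e' = 0),
          c e' * (r ^ kk e')⁻¹)
        + ∑ e' ∈ (A.filter (fun e' => TT e' = e₀)).filter (fun e' => ¬ kk e' = 0),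
          c e' * (r ^ kk e')⁻¹ := by
      intro e₀
      rw [hM_def]
      exact (Finset.sum_filter_add_sum_filter_not _ _ _).symm
    have hM0 : (∑ e' ∈ (A.filter (fun e' => TT e' = e)).filter (fun e' => kk e' = 0),
          c e' * (r ^ kk e')⁻¹)
        + (∑ e' ∈ (A.filter (fun e' => TT e' = (e.2, e.1))).filter (fun e' => kk e' = 0),
          c e' * (r ^ kk e')⁻¹) ≤ c e := by
      rcases Finset.subset_singleton_iff.mp (hS0sub e) with h1 | h1 <;>
        rcases Finset.subset_singleton_iff.mp (hS0sub (e.2, e.1)) with h2 | h2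
      · simp only [h1, h2, Finset.sum_empty]
        linarith
      · simp only [h1, h2, Finset.sum_empty, Finset.sum_singleton, zero_add]
        have hmem : (e.2, e.1) ∈ (A.filter (fun e' => TT e' = (e.2, e.1))).filter
            (fun e' => kk e' = 0) := by rw [h2]; exact Finset.mem_singleton_self _
        have hk0 : kk (e.2, e.1) = 0 := (Finset.mem_filter.mp hmem).2
        rw [hk0, pow_zero, inv_one, mul_one, hcsym]
      · simp only [h1, h2, Finset.sum_empty, Finset.sum_singleton, add_zero]
        have hmem : e ∈ (A.filter (fun e' => TT e' = e)).filter (fun e' => kk e' = 0) := by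
          rw [h1]; exact Finset.mem_singleton_self _
        have hk0 : kk e = 0 := (Finset.mem_filter.mp hmem).2
        rw [hk0, pow_zero, inv_one, mul_one]
      · exfalso
        have hmem1 : e ∈ A := by
          have h3 : e ∈ (A.filter (fun e' => TT e' = e)).filter (fun e' => kk e' = 0) := by
            rw [h1]; exact Finset.mem_singleton_self _
          exact (Finset.mem_filter.mp (Finset.mem_filter.mp h3).1).1
        have hmem2 : (e.2, e.1) ∈ A := by
          have h3 : (e.2, e.1) ∈ (A.filter (fun e' => TT e' = (e.2, e.1))).filter
              (fun e' => kk e' = 0) := by rw [h2]; exact Finset.mem_singleton_self _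
          exact (Finset.mem_filter.mp (Finset.mem_filter.mp h3).1).1
        have hg1 := (hAmem _ hmem1).2
        have hg2 := (hAmem _ hmem2).2
        simp only [] at hg2
        linarith
    have hM1 : (∑ e' ∈ (A.filter (fun e' => TT e' = e)).filter (fun e' => ¬ kk e' = 0),
          c e' * (r ^ kk e')⁻¹)
        + (∑ e' ∈ (A.filter (fun e' => TT e' = (e.2, e.1))).filter (fun e' => ¬ kk e' = 0),
          c e' * (r ^ kk e')⁻¹) ≤ (1/3) * c e := by
      by_cases hS : ((A.filter (fun e' => TT e' = e)).filter
          (fun e' => ¬ kk e' = 0)).Nonempty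
      · obtain ⟨e₁, he₁⟩ := hS
        have hor := hM1orient e e₁ he₁
        have hempty : (A.filter (fun e' => TT e' = (e.2, e.1))).filter
            (fun e' => ¬ kk e' = 0) = ∅ := by
          rw [Finset.eq_empty_iff_forall_notMem]
          intro e₂ he₂
          have hor2 := hM1orient (e.2, e.1) e₂ he₂
          simp only [] at hor2
          nlinarith [hf e.1, hf e.2]
        rw [hempty, Finset.sum_empty, add_zero]
        exact hM1single e hne hQe
      · rw [Finset.not_nonempty_iff_eq_empty.mp hS, Finset.sum_empty, zero_add]
        calc ∑ e' ∈ (A.filter (fun e' => TT e' = (e.2, e.1))).filter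
                (fun e' => ¬ kk e' = 0), c e' * (r ^ kk e')⁻¹
            ≤ (1/3) * c (e.2, e.1) := hM1single (e.2, e.1) hne.symm (hQsymmpos _ _ hQe)
          _ = (1/3) * c e := by rw [hcsym]
    rw [hsplit e, hsplit (e.2, e.1)]
    linarith

  -- main chain
  have hAmem : ∀ e' : X × X, e' ∈ A → (0 < Q e'.1 e'.2 ∧ g e'.2 < g e'.1) := by
    intro e' he'
    exact (Finset.mem_filter.mp he').2
  have hcnonneg : ∀ e' ∈ A, 0 ≤ c e' := by
    intro e' he'
    exact mul_nonneg (hπpos _).le (hAmem e' he').1.le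
  have step1 : ∑ e' ∈ A, c e' * Φ (g e'.1) (g e'.2)
      ≤ ∑ e' ∈ A, c e' * ((r ^ kk e')⁻¹ * Φ (f (TT e').2) (f (TT e').1)) := by
    apply Finset.sum_le_sum
    intro e' he'
    exact mul_le_mul_of_nonneg_left ((hhspec e' (hAmem e' he')).1) (hcnonneg e' he')
  have hmapsTT : ∀ e' ∈ A, TT e' ∈ EE := by
    intro e' he'
    obtain ⟨-, h1, h2, -⟩ := hhspec e' (hAmem e' he')
    rw [hEE_def]
    exact Finset.mem_filter.mpr ⟨mem_univ _, h1, h2⟩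
  have step2 : ∑ e' ∈ A, c e' * ((r ^ kk e')⁻¹ * Φ (f (TT e').2) (f (TT e').1))
      = ∑ e ∈ EE, M e * Φ (f e.2) (f e.1) := by
    rw [← Finset.sum_fiberwise_of_maps_to hmapsTT
      (fun e' => c e' * ((r ^ kk e')⁻¹ * Φ (f (TT e').2) (f (TT e').1)))]
    apply Finset.sum_congr rfl
    intro e _
    rw [hM_def, Finset.sum_mul]
    apply Finset.sum_congr rfl
    intro e' he'
    have hTe : TT e' = e := (Finset.mem_filter.mp he').2
    rw [hTe]
    ring
  have step3 : ∑ e ∈ EE, M e * Φ (f e.2) (f e.1)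
      ≤ (2/3) * ∑ e ∈ EE, c e * Φ (f e.1) (f e.2) := by
    have hEEswap : ∀ e ∈ EE, ((e.2, e.1) : X × X) ∈ EE := by
      intro e he
      obtain ⟨-, hne, hq⟩ := Finset.mem_filter.mp he
      exact Finset.mem_filter.mpr ⟨mem_univ _, hne.symm, hQsymmpos _ _ hq⟩
    have hswap_sum : ∑ e ∈ EE, M (e.2, e.1) * Φ (f e.2) (f e.1)
        = ∑ e ∈ EE, M e * Φ (f e.2) (f e.1) := by
      apply Finset.sum_nbij' (fun e : X × X => (e.2, e.1)) (fun e : X × X => (e.2, e.1))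
        hEEswap hEEswap (fun a _ => rfl) (fun a _ => rfl)
      intro a _
      rw [hsymm (f a.2) (f a.1)]
    calc ∑ e ∈ EE, M e * Φ (f e.2) (f e.1)
        = (1/2) * ∑ e ∈ EE, (M e + M (e.2, e.1)) * Φ (f e.2) (f e.1) := by
          rw [show (∑ e ∈ EE, (M e + M (e.2, e.1)) * Φ (f e.2) (f e.1))
              = (∑ e ∈ EE, M e * Φ (f e.2) (f e.1))
                + ∑ e ∈ EE, M (e.2, e.1) * Φ (f e.2) (f e.1) by
            rw [← Finset.sum_add_distrib]
            apply Finset.sum_congr rfl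
            intro e _
            ring]
          rw [hswap_sum]
          ring
      _ ≤ (1/2) * ∑ e ∈ EE, ((4/3) * c e) * Φ (f e.2) (f e.1) := by
          apply mul_le_mul_of_nonneg_left _ (by norm_num)
          apply Finset.sum_le_sum
          intro e he
          exact mul_le_mul_of_nonneg_right (hMbound e he) (hnn _ _ (hf _) (hf _))
      _ = (2/3) * ∑ e ∈ EE, c e * Φ (f e.1) (f e.2) := by
          rw [Finset.mul_sum, Finset.mul_sum]
          apply Finset.sum_congr rfl
          intro e _
          rw [hsymm (f e.2) (f e.1)]
          ring

  rw [hLHS, hRHS]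
  calc (1/2) * (2 * ∑ e ∈ A, c e * Φ (g e.1) (g e.2))
      = ∑ e' ∈ A, c e' * Φ (g e'.1) (g e'.2) := by ring
    _ ≤ ∑ e ∈ EE, M e * Φ (f e.2) (f e.1) := le_trans step1 (le_of_eq step2)
    _ ≤ (2/3) * ∑ e ∈ EE, c e * Φ (f e.1) (f e.2) := step3
    _ = (4/3) * ((1/2) * ∑ e ∈ EE, c e * Φ (f e.1) (f e.2)) := by ring



theorem comparison_of_dirichlet_forms
    (π : X → ℝ) (Q : X → X → ℝ)
    (hQ : ∀ x y : X, x ≠ y → 0 ≤ Q x y)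
    (hQsum : ∀ x : X, ∑ y : X, Q x y = 0)
    (hirr : MarkovIrreducible Q)
    (hπpos : ∀ x : X, 0 < π x)
    (hπsum : ∑ x : X, π x = 1)
    (hrev : ∀ x y : X, π x * Q x y = π y * Q y x)
    (f : X → ℝ) (hf : ∀ x, 0 < f x) :
     dirichletForm π Q (fun x => Real.sqrt (fStar Q (4 / sparsity Q ^ 2) f x))
        (fun x => Real.sqrt (fStar Q (4 / sparsity Q ^ 2) f x)) ≤
      (4 / 3) * dirichletForm π Q (fun x => Real.sqrt (f x)) (fun x => Real.sqrt (f x)) ∧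
    dirichletForm π Q (fStar Q (4 / sparsity Q ^ 2) f)
        (fun x => Real.log (fStar Q (4 / sparsity Q ^ 2) f x)) ≤
      (4 / 3) * dirichletForm π Q f (fun x => Real.log (f x)) := by
  constructor
  · -- the √ version
    have h := master_comparison π Q hQ hQsum hirr hπpos hrev f hf
      (fun a b => (Real.sqrt a - Real.sqrt b) * (Real.sqrt a - Real.sqrt b))
      (fun a b => by ring)
      (fun a => by ring)
      (fun a b _ _ => mul_self_nonneg _)
      (by
        intro a b b' hb hbb' hb'a
        have h1 : Real.sqrt b ≤ Real.sqrt b' := Real.sqrt_le_sqrt hbb'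
        have h2 : Real.sqrt b' ≤ Real.sqrt a := Real.sqrt_le_sqrt hb'a
        have h3 : (0:ℝ) ≤ Real.sqrt a - Real.sqrt b' := by linarith
        exact mul_le_mul (by linarith) (by linarith) h3 (by linarith))
      (by
        intro l a b hl _ _
        rw [Real.sqrt_mul hl.le, Real.sqrt_mul hl.le]
        linear_combination ((Real.sqrt a - Real.sqrt b) * (Real.sqrt a - Real.sqrt b)) *
          (Real.mul_self_sqrt hl.le))
    have e1 : dirichletForm π Q (fun x => Real.sqrt (fStar Q (4 / sparsity Q ^ 2) f x))
        (fun x => Real.sqrt (fStar Q (4 / sparsity Q ^ 2) f x))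
        = (1/2) * ∑ x : X, ∑ y : X, π x * Q x y *
            ((Real.sqrt (fStar Q (4 / sparsity Q ^ 2) f x)
              - Real.sqrt (fStar Q (4 / sparsity Q ^ 2) f y)) *
             (Real.sqrt (fStar Q (4 / sparsity Q ^ 2) f x)
              - Real.sqrt (fStar Q (4 / sparsity Q ^ 2) f y))) := by
      rw [dirichletForm]
      congr 1
      apply Finset.sum_congr rfl
      intro x _
      apply Finset.sum_congr rfl
      intro y _
      ring
    have e2 : dirichletForm π Q (fun x => Real.sqrt (f x)) (fun x => Real.sqrt (f x))
        = (1/2) * ∑ x : X, ∑ y : X, π x * Q x y *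
            ((Real.sqrt (f x) - Real.sqrt (f y)) * (Real.sqrt (f x) - Real.sqrt (f y))) := by
      rw [dirichletForm]
      congr 1
      apply Finset.sum_congr rfl
      intro x _
      apply Finset.sum_congr rfl
      intro y _
      ring
    rw [e1, e2]
    exact h
  · -- the log version
    have h := master_comparison π Q hQ hQsum hirr hπpos hrev f hf
      (fun a b => (a - b) * (Real.log a - Real.log b))
      (fun a b => by ring)
      (fun a => by ring)
      (by
        intro a b ha hb
        rcases le_total a b with hab | hab
        · have hl : Real.log a ≤ Real.log b := (Real.log_le_log_iff ha hb).mpr hab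
          nlinarith
        · have hl : Real.log b ≤ Real.log a := (Real.log_le_log_iff hb ha).mpr hab
          nlinarith)
      (by
        intro a b b' hb hbb' hb'a
        have h0b' : 0 < b' := lt_of_lt_of_le hb hbb'
        have ha : 0 < a := lt_of_lt_of_le h0b' hb'a
        have h1 : Real.log b ≤ Real.log b' := (Real.log_le_log_iff hb h0b').mpr hbb'
        have h2 : Real.log b' ≤ Real.log a := (Real.log_le_log_iff h0b' ha).mpr hb'a
        exact mul_le_mul (by linarith) (by linarith) (by linarith) (by linarith))
      (by
        intro l a b hl ha hb
        rw [Real.log_mul hl.ne' ha.ne', Real.log_mul hl.ne' hb.ne']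
        ring)
    have e1 : dirichletForm π Q (fStar Q (4 / sparsity Q ^ 2) f)
        (fun x => Real.log (fStar Q (4 / sparsity Q ^ 2) f x))
        = (1/2) * ∑ x : X, ∑ y : X, π x * Q x y *
            ((fStar Q (4 / sparsity Q ^ 2) f x - fStar Q (4 / sparsity Q ^ 2) f y) *
             (Real.log (fStar Q (4 / sparsity Q ^ 2) f x)
              - Real.log (fStar Q (4 / sparsity Q ^ 2) f y))) := by
      rw [dirichletForm]
      congr 1
      apply Finset.sum_congr rfl
      intro x _
      apply Finset.sum_congr rfl
      intro y _
      ring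
    have e2 : dirichletForm π Q f (fun x => Real.log (f x))
        = (1/2) * ∑ x : X, ∑ y : X, π x * Q x y *
            ((f x - f y) * (Real.log (f x) - Real.log (f y))) := by
      rw [dirichletForm]
      congr 1
      apply Finset.sum_congr rfl
      intro x _
      apply Finset.sum_congr rfl
      intro y _
      ring
    rw [e1, e2]
    exact h

end
end
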